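/- arXiv:2308.00386 — 4 statements merged into one kernel-verified Lean document; each statement's English description precedes it below -/
import Mathlib

section
/- Let κ be an infinite cardinal and let α be an order automorphism of σℕ^κ (with pointwise order) such that α(2_x) = 2_x for all x ∈ κ. Then α is the identity map. -/
open scoped Classical

/-- `σℕ^κ`: functions `κ → ℕ` with all values `≥ 1` and only finitely many values `≠ 1`. -/
def sigmaN (κ : Type*) : Set (κ → ℕ) :=
  {a | (∀ x, 1 ≤ a x) ∧ {x | a x ≠ 1}.Finite}

/-- The poset `σℕ^κ` (with the pointwise order, inherited from `κ → ℕ`). -/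
abbrev SN (κ : Type*) := ↥(sigmaN κ)

/-- The constant function `𝟏`. -/
def oneSN (κ : Type*) : SN κ :=
  ⟨fun _ => 1, fun _ => le_refl 1, by simp⟩

/-- `n_x`: value `n` at `x` and `1` elsewhere (for `n ≥ 1`; `max n 1` guards degenerate `n = 0`). -/
noncomputable def nfS {κ : Type*} (n : ℕ) (x : κ) : SN κ :=
  ⟨fun t => if t = x then max n 1 else 1, by
    refine ⟨fun t => ?_, Set.Finite.subset (Set.finite_singleton x) fun t ht => ?_⟩
    · by_cases h : t = x <;> simp [h]
    · simp only [Set.mem_setOf_eq] at ht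
      by_contra hc
      simp only [Set.mem_singleton_iff] at hc
      exact ht (if_neg hc)⟩

section Aux
variable {κ : Type*}

lemma SN.le_iff {a b : SN κ} : a ≤ b ↔ ∀ x, a.val x ≤ b.val x :=
  Subtype.coe_le_coe.symm.trans Pi.le_def

lemma SN.one_le (z : SN κ) (x : κ) : 1 ≤ z.val x := z.2.1 x

lemma nfS_val (n : ℕ) (x t : κ) : (nfS n x).val t = if t = x then max n 1 else 1 := rfl

lemma nfS_le_iff {n : ℕ} {x : κ} {z : SN κ} : nfS n x ≤ z ↔ max n 1 ≤ z.val x := by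
  rw [SN.le_iff]
  constructor
  · intro hh
    have := hh x
    simpa [nfS_val] using this
  · intro hh t
    rcases eq_or_ne t x with rfl | hne
    · simpa [nfS_val] using hh
    · simp [nfS_val, hne, SN.one_le]

lemma oneSN_le (z : SN κ) : oneSN κ ≤ z := SN.le_iff.2 fun x => z.one_le x

lemma nfS_one (x : κ) : nfS 1 x = oneSN κ := by
  apply Subtype.ext; funext t
  simp [nfS_val, oneSN]

lemma eq_nfS {z : SN κ} {x : κ} (hy : ∀ y, y ≠ x → z.val y = 1) :
    z = nfS (z.val x) x := by
  apply Subtype.ext; funext t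
  rcases eq_or_ne t x with rfl | hne
  · simp [nfS_val, Nat.max_eq_left (z.one_le t)]
  · simp [nfS_val, hne, hy t hne]

lemma nfS_lt_succ {n : ℕ} (hn : 1 ≤ n) (x : κ) : nfS n x < nfS (n + 1) x := by
  have hle : nfS n x ≤ nfS (n+1) x := nfS_le_iff.2 (by simp [nfS_val])
  refine lt_of_le_of_ne hle fun he => ?_
  have := congrArg (fun z : SN κ => z.val x) he
  simp [nfS_val] at this
  omega

lemma nfS_cov {n : ℕ} (hn : 1 ≤ n) (x : κ) (c : SN κ)
    (h1 : nfS n x < c) (h2 : c < nfS (n+1) x) : False := by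
  have hle2 : ∀ y, y ≠ x → c.val y = 1 := by
    intro y hy
    have := SN.le_iff.1 h2.le y
    simp [nfS_val, hy] at this
    exact le_antisymm this (c.one_le y)
  have hc : c = nfS (c.val x) x := eq_nfS hle2
  have hlow : n ≤ c.val x := by
    have := SN.le_iff.1 h1.le x
    simpa [nfS_val, Nat.max_eq_left hn] using this
  have hhigh : c.val x ≤ n + 1 := by
    have := SN.le_iff.1 h2.le x
    simpa [nfS_val] using this
  rcases (by omega : c.val x = n ∨ c.val x = n + 1) with he | he <;> rw [he] at hc
  · exact h1.ne' hc
  · exact h2.ne hc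

end Aux

theorem stmt10 {κ : Type*} [Infinite κ] (α : SN κ ≃o SN κ)
    (h : ∀ x : κ, α (nfS 2 x) = nfS 2 x) :
    ∀ z : SN κ, α z = z := by
  have hbot : α (oneSN κ) = oneSN κ := by
    refine le_antisymm ?_ (oneSN_le _)
    have := α.monotone (oneSN_le (α.symm (oneSN κ)))
    rwa [α.apply_symm_apply] at this
  have hfix : ∀ (n : ℕ) (x : κ), α (nfS (n + 1) x) = nfS (n + 1) x := by
    intro n
    induction n with
    | zero => intro x; rw [nfS_one]; exact hbot
    | succ n ih =>
      intro x
      have hn1 : 1 ≤ n + 1 := Nat.le_add_left 1 n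
      set w := α (nfS (n + 1 + 1) x) with hw
      have hw1 : nfS (n + 1) x < w := by
        rw [hw, ← ih x]
        exact α.strictMono (nfS_lt_succ hn1 x)
      have hy : ∀ y, y ≠ x → w.val y = 1 := by
        intro y hyx
        by_contra hc
        have h2w : nfS 2 y ≤ w := nfS_le_iff.2 (by have := w.one_le y; omega)
        rw [hw, ← h y, α.le_iff_le] at h2w
        have := nfS_le_iff.1 h2w
        simp [nfS_val, hyx] at this
      have hcx : n + 1 + 1 ≤ w.val x := by
        have hge : n + 1 ≤ w.val x := by
          have := nfS_le_iff.1 hw1.le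
          simpa [Nat.max_eq_left hn1] using this
        rcases eq_or_lt_of_le hge with he | hlt
        · exfalso
          have hww : w = nfS (w.val x) x := eq_nfS hy
          rw [← he] at hww
          exact hw1.ne' hww
        · omega
      have hle : nfS (n + 1 + 1) x ≤ w :=
        nfS_le_iff.2 (by simpa [Nat.max_eq_left (by omega : 1 ≤ n + 1 + 1)] using hcx)
      rcases eq_or_lt_of_le hle with he | hlt2
      · exact he.symm
      · exfalso
        have hc1 : nfS (n + 1) x < α.symm (nfS (n + 1 + 1) x) := by
          rw [← α.lt_iff_lt, ih x, α.apply_symm_apply]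
          exact nfS_lt_succ hn1 x
        have hc2 : α.symm (nfS (n + 1 + 1) x) < nfS (n + 1 + 1) x := by
          rw [← α.lt_iff_lt, α.apply_symm_apply]
          exact hlt2
        exact nfS_cov hn1 x _ hc1 hc2
  have hfix' : ∀ (n : ℕ) (x : κ), α (nfS n x) = nfS n x := by
    intro n x
    rcases n with _ | m
    · have : nfS 0 x = nfS 1 x := by
        apply Subtype.ext; funext t; simp [nfS_val]
      rw [this, nfS_one]; exact hbot
    · exact hfix m x
  intro z
  apply Subtype.ext; funext x
  apply le_antisymm
  · have h1 : nfS ((α z).val x) x ≤ α z :=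
      nfS_le_iff.2 (by simp [Nat.max_eq_left ((α z).one_le x)])
    rw [← hfix' ((α z).val x) x, α.le_iff_le] at h1
    have := nfS_le_iff.1 h1
    have h2 := (α z).one_le x
    omega
  · have h1 : nfS (z.val x) x ≤ z :=
      nfS_le_iff.2 (by simp [Nat.max_eq_left (z.one_le x)])
    rw [← α.le_iff_le, hfix' (z.val x) x] at h1
    have := nfS_le_iff.1 h1
    have h2 := z.one_le x
    omega
end

section
/- For any infinite cardinal κ, the semigroup IPF(σℕ^κ) is isomorphic to the semidirect product S_κ ⋉ σB^κ, where σB^κ = σℕ^κ × σℕ^κ with multiplication (a,b)*(c,d) = (a + max{b,c} - b, d + max{b,c} - c), and S_κ acts on σB^κ by (a,b) ↦ (a∘g⁻¹, b∘g⁻¹); the semidirect product has multiplication (g,[a,b])(h,[c,d]) = (gh, Φ_h([a,b]) * [c,d]). -/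
open scoped Classical

/-- A partial map `α` on `σℕ^κ` belongs to `IPF(σℕ^κ)` iff it is an order isomorphism
from a principal filter `↑a` onto a principal filter `↑b`. Multiplication in
`IPF(σℕ^κ)` is left-to-right composition of partial maps: `α` followed by `β`
is `β.comp α` (`PFun` composition). -/
def IsIPF {κ : Type*} (α : SN κ →. SN κ) : Prop :=
  ∃ a b : SN κ, α.Dom = {z | a ≤ z} ∧ α.ran = {z | b ≤ z} ∧
    ∀ (z w : SN κ) (hz : z ∈ α.Dom) (hw : w ∈ α.Dom),
      z ≤ w ↔ α.fn z hz ≤ α.fn w hw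

/-- `F°_g : σℕ^κ → σℕ^κ`, `a ↦ a ∘ g⁻¹`. -/
noncomputable def FgSN {κ : Type*} (g : Equiv.Perm κ) (a : SN κ) : SN κ :=
  ⟨fun x => a.1 (g.symm x), by
    refine ⟨fun x => a.2.1 _, Set.Finite.subset (a.2.2.image g) fun x hx => ?_⟩
    exact ⟨g.symm x, hx, by simp⟩⟩

/-- `a + max{b,c} - b` (pointwise) as an element of `σℕ^κ`. -/
noncomputable def bop {κ : Type*} (a b c : SN κ) : SN κ :=
  ⟨fun x => a.1 x + max (b.1 x) (c.1 x) - b.1 x, by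
    refine ⟨fun x => ?_, Set.Finite.subset ((a.2.2.union b.2.2).union c.2.2) fun x hx => ?_⟩
    · have h1 := a.2.1 x
      have h2 : b.1 x ≤ max (b.1 x) (c.1 x) := le_max_left _ _
      dsimp only
      omega
    · simp only [Set.mem_setOf_eq] at hx
      by_contra h
      simp only [Set.mem_union, Set.mem_setOf_eq, not_or, not_not] at h
      exact hx (by simp [h.1.1, h.1.2, h.2])⟩

/-- The multiplication of `σB^κ`: `(a,b) * (c,d) = (a + max{b,c} - b, d + max{b,c} - c)`. -/
noncomputable def bmul {κ : Type*} (p q : SN κ × SN κ) : SN κ × SN κ :=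
  (bop p.1 p.2 q.1, bop q.2 q.1 p.2)

/-- The action of `S_κ` on `σB^κ`: `(a,b) ↦ (a ∘ g⁻¹, b ∘ g⁻¹)`. -/
noncomputable def PhiG {κ : Type*} (g : Equiv.Perm κ) (p : SN κ × SN κ) : SN κ × SN κ :=
  (FgSN g p.1, FgSN g p.2)

/-- The multiplication of the semidirect product `S_κ ⋉ σB^κ`:
`(g,[a,b])(h,[c,d]) = (gh, Φ_h([a,b]) * [c,d])`, where `g.trans h` applies `g` first. -/
noncomputable def sdMul {κ : Type*} (u v : Equiv.Perm κ × (SN κ × SN κ)) :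
    Equiv.Perm κ × (SN κ × SN κ) :=
  (u.1.trans v.1, bmul (PhiG v.1 u.2) v.2)

namespace Aux

variable {κ : Type*}

lemma SNle' {a b : SN κ} (h : a ≤ b) (x : κ) : a.1 x ≤ b.1 x := h x

lemma SNle'' {a b : SN κ} (h : ∀ x, a.1 x ≤ b.1 x) : a ≤ b := h

lemma SNext {a b : SN κ} (h : ∀ x, a.1 x = b.1 x) : a = b := Subtype.ext (funext h)

lemma SNone {a : SN κ} (x : κ) : 1 ≤ a.1 x := a.2.1 x

/-- add `n` at coordinate `x` -/
noncomputable def bump (a : SN κ) (x : κ) (n : ℕ) : SN κ :=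
  ⟨fun y => a.1 y + (if y = x then n else 0), by
    refine ⟨fun y => le_trans (a.2.1 y) (Nat.le_add_right _ _), ?_⟩
    apply (a.2.2.union (Set.finite_singleton x)).subset
    intro y hy
    rcases eq_or_ne y x with rfl | h
    · exact Or.inr rfl
    · left; simpa [h] using hy⟩

@[simp] lemma bump_apply (a : SN κ) (x : κ) (n : ℕ) (y : κ) :
    (bump a x n).1 y = a.1 y + (if y = x then n else 0) := rfl

lemma bump_zero (a : SN κ) (x : κ) : bump a x 0 = a := SNext fun y => by simp [bump]

lemma le_bump (a : SN κ) (x : κ) (n : ℕ) : a ≤ bump a x n :=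
  SNle'' fun y => Nat.le_add_right _ _

lemma bump_le_bump (a : SN κ) (x : κ) {m n : ℕ} (h : m ≤ n) : bump a x m ≤ bump a x n :=
  SNle'' fun y => by simp only [bump_apply]; split <;> omega

lemma bump_ne (a : SN κ) (x : κ) {n : ℕ} (h : n ≠ 0) : bump a x n ≠ a := by
  intro he
  have := congrArg (fun z : SN κ => z.1 x) he
  simp at this; omega

lemma bump_ne_bump (a : SN κ) (x : κ) {m n : ℕ} (h : m ≠ n) : bump a x m ≠ bump a x n := by
  intro he
  have := congrArg (fun z : SN κ => z.1 x) he
  simp at this; omega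

lemma bump_bump (a : SN κ) (x : κ) (m n : ℕ) : bump (bump a x m) x n = bump a x (m + n) :=
  SNext fun y => by simp only [bump_apply]; split <;> omega

lemma bump_right_inj {b : SN κ} {y y' : κ} (h : bump b y 1 = bump b y' 1) : y = y' := by
  by_contra hne
  have := congrArg (fun z : SN κ => z.1 y) h
  simp [hne] at this

lemma bump_le_bump_one {b : SN κ} {y y' : κ} (h : bump b y 1 ≤ bump b y' 1) : y = y' := by
  by_contra hne
  have := SNle' h y
  simp [hne] at this

/-- elements between `a` and `a + δₓ` -/
lemma lem_two {a z : SN κ} {x : κ} (h1 : a ≤ z) (h2 : z ≤ bump a x 1) :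
    z = a ∨ z = bump a x 1 := by
  by_cases hx : z.1 x = a.1 x
  · left
    refine SNext fun y => ?_
    have hy1 := SNle' h1 y; have hy2 := SNle' h2 y
    simp only [bump_apply] at hy2
    rcases eq_or_ne y x with rfl | h
    · exact hx
    · simp [h] at hy2; omega
  · right
    refine SNext fun y => ?_
    have hy1 := SNle' h1 y; have hy2 := SNle' h2 y
    have hx1 := SNle' h1 x; have hx2 := SNle' h2 x
    simp only [bump_apply] at hy2 hx2 ⊢
    rcases eq_or_ne y x with rfl | h
    · simp at hx2 ⊢; omega
    · simp [h] at hy2 ⊢; omega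

/-- cover characterization -/
lemma lem_cover {a w : SN κ} (hlt : a < w) (hcov : ∀ u, a < u → u ≤ w → u = w) :
    ∃ y, w = bump a y 1 := by
  have hle : a ≤ w := hlt.le
  have hne : a ≠ w := hlt.ne
  have : ∃ y, a.1 y ≠ w.1 y := by
    by_contra h
    push_neg at h
    exact hne (SNext h)
  obtain ⟨y, hy⟩ := this
  have hylt : a.1 y < w.1 y := lt_of_le_of_ne (SNle' hle y) hy
  have h1 : bump a y 1 ≤ w := by
    refine SNle'' fun y' => ?_
    have := SNle' hle y'
    simp only [bump_apply]; split
    · subst ‹y' = y›; omega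
    · omega
  have h2 : a < bump a y 1 := lt_of_le_of_ne (le_bump a y 1) (Ne.symm (bump_ne a y one_ne_zero))
  exact ⟨y, (hcov _ h2 h1).symm⟩

/-- pointwise max -/
noncomputable def sjoin (z w : SN κ) : SN κ :=
  ⟨fun y => max (z.1 y) (w.1 y), by
    refine ⟨fun y => le_trans (z.2.1 y) (le_max_left _ _), ?_⟩
    apply (z.2.2.union w.2.2).subset
    intro y hy
    simp only [Set.mem_setOf_eq] at hy
    by_contra h
    simp only [Set.mem_union, Set.mem_setOf_eq, not_or, not_not] at h
    exact hy (by simp [h.1, h.2])⟩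

@[simp] lemma sjoin_apply (z w : SN κ) (y : κ) :
    (sjoin z w).1 y = max (z.1 y) (w.1 y) := rfl

lemma le_sjoin_left (z w : SN κ) : z ≤ sjoin z w := SNle'' fun y => le_max_left _ _
lemma le_sjoin_right (z w : SN κ) : w ≤ sjoin z w := SNle'' fun y => le_max_right _ _
lemma sjoin_le {z w u : SN κ} (h1 : z ≤ u) (h2 : w ≤ u) : sjoin z w ≤ u :=
  SNle'' fun y => max_le (SNle' h1 y) (SNle' h2 y)

/-- the target value of the standard map determined by `(g, a, b)` -/
noncomputable def tgt (g : Equiv.Perm κ) (a b z : SN κ) : SN κ :=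
  ⟨fun x => b.1 x + (z.1 (g.symm x) - a.1 (g.symm x)), by
    refine ⟨fun x => le_trans (b.2.1 x) (Nat.le_add_right _ _), ?_⟩
    apply (b.2.2.union ((z.2.2.union a.2.2).image g)).subset
    intro x hx
    simp only [Set.mem_setOf_eq] at hx
    by_cases hb : b.1 x = 1
    · right
      refine ⟨g.symm x, ?_, Equiv.apply_symm_apply g x⟩
      by_contra hc
      simp only [Set.mem_union, Set.mem_setOf_eq, not_or, not_not] at hc
      exact hx (by rw [hb, hc.1, hc.2])
    · left; exact hb⟩

@[simp] lemma tgt_apply (g : Equiv.Perm κ) (a b z : SN κ) (x : κ) :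
    (tgt g a b z).1 x = b.1 x + (z.1 (g.symm x) - a.1 (g.symm x)) := rfl

end Aux

namespace Aux

variable {κ : Type*}

theorem key (a b : SN κ) (f : ∀ z : SN κ, a ≤ z → SN κ)
    (ford : ∀ z w hz hw, z ≤ w ↔ f z hz ≤ f w hw)
    (fge : ∀ z hz, b ≤ f z hz)
    (fsurj : ∀ w, b ≤ w → ∃ z, ∃ hz : a ≤ z, f z hz = w) :
    ∃ g : Equiv.Perm κ, ∀ z hz, f z hz = tgt g a b z := by
  have finj : ∀ z w hz hw, f z hz = f w hw → z = w := fun z w hz hw h =>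
    le_antisymm ((ford z w hz hw).2 h.le) ((ford w z hw hz).2 h.ge)
  have fcongr : ∀ {z w : SN κ} {hz : a ≤ z} {hw : a ≤ w}, z = w → f z hz = f w hw := by
    rintro z w hz hw rfl; rfl
  have fa : ∀ h, f a h = b := by
    intro h
    obtain ⟨z, hz, hzb⟩ := fsurj b le_rfl
    exact le_antisymm (hzb ▸ (ford a z h hz).1 hz) (fge a h)
  have step1 : ∀ x : κ, ∃ y, f (bump a x 1) (le_bump a x 1) = bump b y 1 := by
    intro x
    apply lem_cover (a := b)
    · refine lt_of_le_of_ne (fge _ _) ?_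
      intro he
      have h1 := finj _ _ le_rfl (le_bump a x 1) (by rw [fa]; exact he)
      exact bump_ne a x one_ne_zero h1.symm
    · intro u hu hle
      obtain ⟨z, hz, rfl⟩ := fsurj u hu.le
      have h1 : z ≤ bump a x 1 := (ford _ _ hz (le_bump a x 1)).2 hle
      rcases lem_two hz h1 with rfl | rfl
      · exact absurd (fa hz) hu.ne'
      · rfl
  choose g0 hg0 using step1
  have lemA : ∀ (n : ℕ) (x : κ), f (bump a x n) (le_bump a x n) = bump b (g0 x) n := by
    intro n
    induction n with
    | zero =>
      intro x
      have h1 : f (bump a x 0) (le_bump a x 0) = f a le_rfl := fcongr (bump_zero a x)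
      rw [h1, fa, bump_zero]
    | succ n IH =>
      intro x
      match n, IH with
      | 0, _ => exact hg0 x
      | (m+1), IH =>
        have IH' := IH x
        have hcv : ∀ u, bump b (g0 x) (m+1) < u →
            u ≤ f (bump a x (m+2)) (le_bump a x (m+2)) →
            u = f (bump a x (m+2)) (le_bump a x (m+2)) := by
          intro u hu hle
          obtain ⟨z, hz, rfl⟩ := fsurj u (le_trans (le_bump b (g0 x) (m+1)) hu.le)
          have h1 : bump a x (m+1) ≤ z := (ford _ _ (le_bump a x (m+1)) hz).2 (IH' ▸ hu.le)
          have h2 : z ≤ bump a x (m+2) := (ford _ _ hz (le_bump a x (m+2))).2 hle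
          have h2' : z ≤ bump (bump a x (m+1)) x 1 := by rw [bump_bump]; exact h2
          rcases lem_two h1 h2' with heq | heq
          · exfalso
            have h3 : f z hz = bump b (g0 x) (m+1) := (fcongr heq).trans IH'
            exact hu.ne' h3
          · exact fcongr (heq.trans (bump_bump a x (m+1) 1))
        have hlt : bump b (g0 x) (m+1) < f (bump a x (m+2)) (le_bump a x (m+2)) := by
          refine lt_of_le_of_ne ?_ ?_
          · rw [← IH']
            exact (ford _ _ _ _).1 (bump_le_bump a x (by omega))
          · intro he
            have h1 := finj _ _ _ _ (IH'.trans he)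
            exact bump_ne_bump a x (by omega) h1
        obtain ⟨y, hy⟩ := lem_cover hlt hcv
        have hy' : y = g0 x := by
          by_contra hne
          have hu2 : bump b y 1 ≤ bump (bump b (g0 x) (m+1)) y 1 := by
            refine SNle'' fun y' => ?_
            simp only [bump_apply]
            split_ifs <;> omega
          have hu2' : bump b y 1 ≤ f (bump a x (m+2)) (le_bump a x (m+2)) :=
            le_trans hu2 (le_of_eq hy.symm)
          obtain ⟨z, hz, hz2⟩ := fsurj (bump b y 1) (le_bump b y 1)
          have hzle : z ≤ bump a x (m+2) := (ford _ _ hz (le_bump a x (m+2))).2 (hz2 ▸ hu2')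
          by_cases hc : z.1 x ≤ a.1 x + 1
          · have hle1 : z ≤ bump a x 1 := by
              refine SNle'' fun y' => ?_
              have h3 := SNle' hzle y'
              simp only [bump_apply] at h3 ⊢
              rcases eq_or_ne y' x with rfl | h5
              · simp at h3 ⊢; omega
              · simp only [if_neg h5] at h3 ⊢; omega
            have h4 : f z hz ≤ f (bump a x 1) (le_bump a x 1) := (ford _ _ _ _).1 hle1
            rw [hz2, hg0 x] at h4
            exact hne (bump_le_bump_one h4)
          · have hle1 : bump a x 1 ≤ z := by
              refine SNle'' fun y' => ?_
              have h3 := SNle' hz y'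
              simp only [bump_apply]
              rcases eq_or_ne y' x with rfl | h5
              · simp; omega
              · simp only [if_neg h5]; omega
            have h4 : f (bump a x 1) (le_bump a x 1) ≤ f z hz := (ford _ _ _ _).1 hle1
            rw [hz2, hg0 x] at h4
            exact hne (bump_le_bump_one h4).symm
        subst hy'
        rw [hy, bump_bump]
  have ginj : Function.Injective g0 := by
    intro x x' he
    have h1 : f (bump a x 1) (le_bump a x 1) = f (bump a x' 1) (le_bump a x' 1) := by
      rw [hg0, hg0, he]
    have h2 := finj _ _ _ _ h1
    by_contra hne
    have h3 := congrArg (fun q : SN κ => q.1 x) h2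
    simp [hne] at h3
  have gsurj : Function.Surjective g0 := by
    intro y
    obtain ⟨z, hz, hzy⟩ := fsurj (bump b y 1) (le_bump b y 1)
    have hza : a < z := by
      refine lt_of_le_of_ne hz ?_
      intro he
      have h2 := (fcongr (hz := hz) (hw := le_rfl) he.symm).symm.trans hzy
      rw [fa] at h2
      exact bump_ne b y one_ne_zero h2.symm
    have hcov : ∀ u, a < u → u ≤ z → u = z := by
      intro u hu hle
      have h3 : f u hu.le ≤ bump b y 1 := hzy ▸ (ford _ _ hu.le hz).1 hle
      rcases lem_two (fge u hu.le) h3 with he | he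
      · exfalso
        exact hu.ne' (finj u a hu.le le_rfl (he.trans (fa le_rfl).symm))
      · exact finj u z hu.le hz (he.trans hzy.symm)
    obtain ⟨x, hx⟩ := lem_cover hza hcov
    refine ⟨x, ?_⟩
    exact bump_right_inj
      ((hg0 x).symm.trans ((fcongr (hz := le_bump a x 1) (hw := hz) hx.symm).trans hzy))
  set g : Equiv.Perm κ := Equiv.ofBijective g0 ⟨ginj, gsurj⟩ with hgdef
  have hgg : ∀ t, g t = g0 t := fun _ => rfl
  have fjoin : ∀ z w (hz : a ≤ z) (hw : a ≤ w),
      f (sjoin z w) (le_trans hz (le_sjoin_left z w)) = sjoin (f z hz) (f w hw) := by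
    intro z w hz hw
    have hb : b ≤ sjoin (f z hz) (f w hw) := le_trans (fge z hz) (le_sjoin_left _ _)
    obtain ⟨u, hu, hfu⟩ := fsurj _ hb
    have h1 : z ≤ u := (ford _ _ hz hu).2 (le_of_le_of_eq (le_sjoin_left _ _) hfu.symm)
    have h2 : w ≤ u := (ford _ _ hw hu).2 (le_of_le_of_eq (le_sjoin_right _ _) hfu.symm)
    have h3 : f (sjoin z w) (le_trans hz (le_sjoin_left z w)) ≤ f u hu :=
      (ford _ _ _ _).1 (sjoin_le h1 h2)
    refine le_antisymm (le_of_le_of_eq h3 hfu) (sjoin_le ?_ ?_)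
    · exact (ford _ _ _ _).1 (le_sjoin_left z w)
    · exact (ford _ _ _ _).1 (le_sjoin_right z w)
  have lemB : ∀ (s : Finset κ) (z : SN κ) (hz : a ≤ z), (∀ x, x ∉ s → z.1 x = a.1 x) →
      f z hz = tgt g a b z := by
    intro s
    induction s using Finset.induction_on with
    | empty =>
      intro z hz hs
      have hza : z = a := SNext fun x => hs x (Finset.notMem_empty x)
      subst hza
      rw [fa]
      exact SNext fun x => by simp
    | @insert x₀ s hx₀ IH =>
      intro z hz hs
      have hz'mem : (fun y => if y = x₀ then a.1 y else z.1 y) ∈ sigmaN κ := by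
        constructor
        · intro y
          dsimp only
          split
          · exact a.2.1 y
          · exact z.2.1 y
        · apply (a.2.2.union z.2.2).subset
          intro y hy
          simp only [Set.mem_setOf_eq] at hy
          split at hy
          · exact Or.inl hy
          · exact Or.inr hy
      set z' : SN κ := ⟨_, hz'mem⟩ with hz'def
      have hz'app : ∀ y, z'.1 y = if y = x₀ then a.1 y else z.1 y := fun y => rfl
      have hz' : a ≤ z' := by
        refine SNle'' fun y => ?_
        rw [hz'app]
        split
        · exact le_rfl
        · exact SNle' hz y
      have hs' : ∀ x, x ∉ s → z'.1 x = a.1 x := by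
        intro y hy
        rw [hz'app]
        split
        · rfl
        · exact hs y (by simp [Finset.mem_insert, hy, ‹¬y = x₀›])
      set m := z.1 x₀ - a.1 x₀ with hm
      have hzeq : z = sjoin z' (bump a x₀ m) := by
        refine SNext fun y => ?_
        have h1 := SNle' hz y
        have h2 := SNle' hz x₀
        simp only [sjoin_apply, bump_apply, hz'app]
        split_ifs with h5
        · subst h5; omega
        · omega
      have hjoin := fjoin z' (bump a x₀ m) hz' (le_bump a x₀ m)
      have hcg : f z hz = f (sjoin z' (bump a x₀ m))
          (le_trans hz' (le_sjoin_left z' (bump a x₀ m))) := fcongr hzeq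
      rw [hcg, hjoin, IH z' hz' hs', lemA m x₀]
      refine SNext fun y => ?_
      have h2 := SNle' hz x₀
      simp only [sjoin_apply, tgt_apply, bump_apply, hz'app]
      split_ifs with h5 h6 h7
      · subst h5
        omega
      · subst h5
        exact absurd (g.apply_symm_apply y).symm h6
      · exact absurd (by rw [h7]; exact g.symm_apply_apply x₀) h5
      · omega
  refine ⟨g, fun z hz => ?_⟩
  have hfin : {x | z.1 x ≠ a.1 x}.Finite := by
    apply (z.2.2.union a.2.2).subset
    intro x hx
    simp only [Set.mem_setOf_eq] at hx
    by_contra hc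
    simp only [Set.mem_union, Set.mem_setOf_eq, not_or, not_not] at hc
    exact hx (by rw [hc.1, hc.2])
  exact lemB hfin.toFinset z hz fun x hx => by
    by_contra hc
    exact hx (hfin.mem_toFinset.2 hc)

end Aux


namespace Aux

variable {κ : Type*}

noncomputable def stdMap (g : Equiv.Perm κ) (a b : SN κ) : SN κ →. SN κ :=
  fun z => ⟨a ≤ z, fun _ => tgt g a b z⟩

lemma mem_stdMap {g : Equiv.Perm κ} {a b z y : SN κ} :
    y ∈ stdMap g a b z ↔ (a ≤ z ∧ tgt g a b z = y) := by
  simp [stdMap, Part.mem_mk_iff, exists_prop]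

lemma stdMap_ran (g : Equiv.Perm κ) (a b : SN κ) :
    (stdMap g a b).ran = {w | b ≤ w} := by
  ext w
  simp only [PFun.ran, Set.mem_setOf_eq, mem_stdMap]
  constructor
  · rintro ⟨z, hz, rfl⟩
    exact SNle'' fun x => Nat.le_add_right _ _
  · intro hw
    have hzmem : (fun x => a.1 x + (w.1 (g x) - b.1 (g x))) ∈ sigmaN κ := by
      constructor
      · intro x; exact le_trans (a.2.1 x) (Nat.le_add_right _ _)
      · apply (a.2.2.union ((w.2.2.union b.2.2).image g.symm)).subset
        intro x hx
        simp only [Set.mem_setOf_eq] at hx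
        by_cases ha : a.1 x = 1
        · right
          refine ⟨g x, ?_, g.symm_apply_apply x⟩
          by_contra hc
          simp only [Set.mem_union, Set.mem_setOf_eq, not_or, not_not] at hc
          exact hx (by rw [ha, hc.1, hc.2])
        · left; exact ha
    refine ⟨⟨_, hzmem⟩, SNle'' fun x => Nat.le_add_right _ _, SNext fun x => ?_⟩
    simp only [tgt_apply]
    have h1 := SNle' hw x
    show b.1 x + (a.1 (g.symm x) + (w.1 (g (g.symm x)) - b.1 (g (g.symm x))) - a.1 (g.symm x))
      = w.1 x
    simp only [Equiv.apply_symm_apply]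
    omega

lemma stdMap_isIPF (g : Equiv.Perm κ) (a b : SN κ) : IsIPF (stdMap g a b) := by
  refine ⟨a, b, rfl, stdMap_ran g a b, ?_⟩
  intro z w hz hw
  have hz' : a ≤ z := hz
  have hw' : a ≤ w := hw
  have e1 : (stdMap g a b).fn z hz = tgt g a b z := rfl
  have e2 : (stdMap g a b).fn w hw = tgt g a b w := rfl
  rw [e1, e2]
  constructor
  · intro h
    refine SNle'' fun x => ?_
    simp only [tgt_apply]
    have h1 := SNle' h (g.symm x)
    have h2 := SNle' hz' (g.symm x)
    omega
  · intro h
    refine SNle'' fun x => ?_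
    have h1 := SNle' h (g x)
    simp only [tgt_apply, Equiv.symm_apply_apply] at h1
    have h2 := SNle' hz' x
    have h3 := SNle' hw' x
    omega

lemma tgt_self (g : Equiv.Perm κ) (a b : SN κ) : tgt g a b a = b :=
  SNext fun x => by simp

lemma tgt_bump (g : Equiv.Perm κ) (a b : SN κ) (x : κ) :
    tgt g a b (bump a x 1) = bump b (g x) 1 := by
  refine SNext fun y => ?_
  simp only [tgt_apply, bump_apply]
  rcases eq_or_ne (g.symm y) x with he | he
  · rw [if_pos he, if_pos (by rw [← he]; exact (g.apply_symm_apply y).symm)]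
    omega
  · rw [if_neg he, if_neg (fun hc => he (by rw [hc]; exact g.symm_apply_apply x))]
    omega

lemma stdMap_inj {g g' : Equiv.Perm κ} {a b a' b' : SN κ}
    (h : stdMap g a b = stdMap g' a' b') : g = g' ∧ a = a' ∧ b = b' := by
  have hdom : ∀ z : SN κ, (a ≤ z) ↔ (a' ≤ z) := by
    intro z
    constructor
    · intro hz
      have h1 : tgt g a b z ∈ stdMap g a b z := mem_stdMap.2 ⟨hz, rfl⟩
      rw [h] at h1
      exact (mem_stdMap.1 h1).1
    · intro hz
      have h1 : tgt g' a' b' z ∈ stdMap g' a' b' z := mem_stdMap.2 ⟨hz, rfl⟩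
      rw [← h] at h1
      exact (mem_stdMap.1 h1).1
  have ha : a = a' := le_antisymm ((hdom a').2 le_rfl) ((hdom a).1 le_rfl)
  subst ha
  have hval : ∀ z : SN κ, a ≤ z → tgt g a b z = tgt g' a b' z := by
    intro z hz
    have h1 : tgt g a b z ∈ stdMap g' a b' z := by
      rw [← h]; exact mem_stdMap.2 ⟨hz, rfl⟩
    exact ((mem_stdMap.1 h1).2).symm
  have hb : b = b' := by
    have h1 := hval a le_rfl
    rw [tgt_self, tgt_self] at h1
    exact h1
  subst hb
  refine ⟨?_, rfl, rfl⟩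
  ext x
  have h1 := hval (bump a x 1) (le_bump a x 1)
  rw [tgt_bump, tgt_bump] at h1
  exact bump_right_inj h1

theorem classify {α : SN κ →. SN κ} (hα : IsIPF α) :
    ∃ g a b, α = stdMap g a b := by
  obtain ⟨a, b, hdom, hran, hord⟩ := hα
  have mem : ∀ z : SN κ, a ≤ z → z ∈ α.Dom := fun z hz => by rw [hdom]; exact hz
  have fge : ∀ z (hz : a ≤ z), b ≤ α.fn z (mem z hz) := by
    intro z hz
    have h1 : α.fn z (mem z hz) ∈ α z := Part.get_mem _
    have h2 : α.fn z (mem z hz) ∈ α.ran := ⟨z, h1⟩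
    rw [hran] at h2; exact h2
  have fsurj : ∀ w, b ≤ w → ∃ z, ∃ hz : a ≤ z, α.fn z (mem z hz) = w := by
    intro w hw
    have h1 : w ∈ α.ran := by rw [hran]; exact hw
    obtain ⟨z, hzw⟩ := h1
    obtain ⟨hd, hget⟩ := hzw
    have hz : a ≤ z := by
      have h2 : z ∈ α.Dom := hd
      rwa [hdom] at h2
    exact ⟨z, hz, hget⟩
  obtain ⟨g, hg⟩ := key a b (fun z hz => α.fn z (mem z hz))
    (fun z w hz hw => hord z w (mem z hz) (mem w hw)) fge fsurj
  refine ⟨g, a, b, ?_⟩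
  funext z
  refine Part.ext' ?_ ?_
  · show (α z).Dom ↔ (a ≤ z)
    constructor
    · intro hd
      have h2 : z ∈ α.Dom := hd
      rwa [hdom] at h2
    · intro hz; exact mem z hz
  · intro h1 h2
    exact hg z h2

lemma comp_std (g h : Equiv.Perm κ) (a b c d : SN κ) :
    (stdMap h c d).comp (stdMap g a b) =
      stdMap (g.trans h) (tgt g.symm b a c) (tgt h c d b) := by
  funext z
  rw [PFun.comp_apply]
  refine Part.ext fun y => ?_
  refine (Part.mem_bind_iff (f := stdMap g a b z) (g := stdMap h c d)).trans ?_
  simp only [mem_stdMap]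
  constructor
  · rintro ⟨w, ⟨hz, rfl⟩, hcw, rfl⟩
    constructor
    · refine SNle'' fun x => ?_
      have h1 := SNle' hz x
      have h2 := SNle' hcw (g x)
      simp only [tgt_apply, Equiv.symm_apply_apply] at h2
      simp only [tgt_apply, Equiv.symm_symm]
      omega
    · refine SNext fun x => ?_
      have h1 := SNle' hz (g.symm (h.symm x))
      have h2 := SNle' hcw (h.symm x)
      simp only [tgt_apply] at h2 ⊢
      simp only [Equiv.symm_trans_apply, Equiv.symm_symm, Equiv.apply_symm_apply]
      omega
  · rintro ⟨hEz, rfl⟩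
    have haz : a ≤ z := by
      refine SNle'' fun x => ?_
      have h1 := SNle' hEz x
      simp only [tgt_apply, Equiv.symm_symm] at h1
      omega
    have hcw : c ≤ tgt g a b z := by
      refine SNle'' fun x => ?_
      have h1 := SNle' hEz (g.symm x)
      simp only [tgt_apply, Equiv.symm_symm, Equiv.apply_symm_apply] at h1
      simp only [tgt_apply]
      have h2 := SNle' haz (g.symm x)
      omega
    refine ⟨tgt g a b z, ⟨haz, rfl⟩, hcw, ?_⟩
    refine SNext fun x => ?_
    have h1 := SNle' hEz (g.symm (h.symm x))
    simp only [tgt_apply, Equiv.symm_symm, Equiv.apply_symm_apply] at h1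
    have h2 := SNle' haz (g.symm (h.symm x))
    simp only [tgt_apply]
    simp only [Equiv.symm_trans_apply, Equiv.symm_symm, Equiv.apply_symm_apply]
    omega

end Aux

namespace Aux

variable {κ : Type*}

lemma FgSN_apply (g : Equiv.Perm κ) (a : SN κ) (x : κ) :
    (FgSN g a).1 x = a.1 (g.symm x) := rfl

lemma bop_apply (a b c : SN κ) (x : κ) :
    (bop a b c).1 x = a.1 x + max (b.1 x) (c.1 x) - b.1 x := rfl

lemma FgSN_symm (g : Equiv.Perm κ) (a : SN κ) : FgSN g.symm (FgSN g a) = a :=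
  SNext fun x => by
    simp only [FgSN_apply, Equiv.symm_symm, Equiv.symm_apply_apply]

lemma FgSN_symm' (g : Equiv.Perm κ) (a : SN κ) : FgSN g (FgSN g.symm a) = a :=
  SNext fun x => by
    simp only [FgSN_apply, Equiv.symm_symm, Equiv.apply_symm_apply]

noncomputable def Psi {κ : Type*} (α : {α : SN κ →. SN κ // IsIPF α}) :
    Equiv.Perm κ × (SN κ × SN κ) :=
  ((classify α.2).choose, (FgSN (classify α.2).choose (classify α.2).choose_spec.choose,
    (classify α.2).choose_spec.choose_spec.choose))

lemma Psi_eq {κ : Type*} (α : {α : SN κ →. SN κ // IsIPF α}) {g : Equiv.Perm κ} {a b : SN κ}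
    (h : α.1 = stdMap g a b) : Psi α = (g, (FgSN g a, b)) := by
  have hspec := (classify α.2).choose_spec.choose_spec.choose_spec
  obtain ⟨hg, ha, hb⟩ := stdMap_inj (hspec.symm.trans h)
  subst hg; subst ha; subst hb
  rfl

lemma Psi_spec {κ : Type*} (α : {α : SN κ →. SN κ // IsIPF α}) :
    α.1 = stdMap (Psi α).1 (FgSN (Psi α).1.symm (Psi α).2.1) (Psi α).2.2 := by
  have hspec := (classify α.2).choose_spec.choose_spec.choose_spec
  simp only [Psi]
  rw [FgSN_symm]
  exact hspec

end Aux

/-- `IPF(σℕ^κ)` is isomorphic to the semidirect product `S_κ ⋉ σB^κ`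
(multiplication in `IPF(σℕ^κ)` is left-to-right composition: `α` then `β`
is `β.comp α`). -/
theorem stmt17 {κ : Type*} [Infinite κ] :
    ∃ Ψ : {α : SN κ →. SN κ // IsIPF α} → Equiv.Perm κ × (SN κ × SN κ),
      Function.Bijective Ψ ∧
      ∀ (α β : {α : SN κ →. SN κ // IsIPF α}) (h : IsIPF (β.1.comp α.1)),
        Ψ ⟨β.1.comp α.1, h⟩ = sdMul (Ψ α) (Ψ β) := by
  classical
  refine ⟨Aux.Psi, ⟨?_, ?_⟩, ?_⟩
  · intro α β h
    apply Subtype.ext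
    rw [Aux.Psi_spec α, Aux.Psi_spec β, h]
  · rintro ⟨g, A, B⟩
    refine ⟨⟨Aux.stdMap g (FgSN g.symm A) B, Aux.stdMap_isIPF _ _ _⟩, ?_⟩
    rw [Aux.Psi_eq _ rfl, Aux.FgSN_symm']
  · intro α β h
    obtain ⟨g1, a1, b1, h1⟩ := Aux.classify α.2
    obtain ⟨g2, a2, b2, h2⟩ := Aux.classify β.2
    have hcomp : β.1.comp α.1
        = Aux.stdMap (g1.trans g2) (Aux.tgt g1.symm b1 a1 a2) (Aux.tgt g2 a2 b2 b1) := by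
      rw [h1, h2, Aux.comp_std]
    rw [Aux.Psi_eq _ hcomp, Aux.Psi_eq α h1, Aux.Psi_eq β h2]
    simp only [sdMul, bmul, PhiG, Prod.mk.injEq]
    refine ⟨trivial, ?_, ?_⟩
    · refine Aux.SNext fun x => ?_
      simp only [Aux.FgSN_apply, Aux.tgt_apply, Aux.bop_apply, Equiv.symm_trans_apply,
        Equiv.symm_symm, Equiv.apply_symm_apply]
      omega
    · refine Aux.SNext fun x => ?_
      simp only [Aux.FgSN_apply, Aux.tgt_apply, Aux.bop_apply]
      omega
end

section
/- For any infinite cardinal κ, the semigroup IPF(σℕ^κ) is E-unitary: if αε is an idempotent for some idempotent ε ∈ IPF(σℕ^κ), then α is an idempotent. -/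
open scoped Classical

namespace Stmt18Aux
variable {κ : Type*}

lemma le_iff {z w : SN κ} : z ≤ w ↔ ∀ x, z.1 x ≤ w.1 x := by
  constructor
  · intro h x; exact h x
  · intro h; exact h

/-- pointwise max -/
noncomputable def ssup (z w : SN κ) : SN κ :=
  ⟨fun x => max (z.1 x) (w.1 x), ⟨fun x => le_max_of_le_left (z.2.1 x),
    (z.2.2.union w.2.2).subset (by
      intro x hx
      simp only [Set.mem_union, Set.mem_setOf_eq]
      by_contra hc
      push_neg at hc
      simp [Set.mem_setOf_eq, hc.1, hc.2] at hx)⟩⟩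

lemma le_ssup_left (z w : SN κ) : z ≤ ssup z w := fun x => le_max_left _ _
lemma le_ssup_right (z w : SN κ) : w ≤ ssup z w := fun x => le_max_right _ _
lemma ssup_le {z w u : SN κ} (h1 : z ≤ u) (h2 : w ≤ u) : ssup z w ≤ u :=
  fun x => max_le (h1 x) (h2 x)

/-- add one at coordinate t -/
noncomputable def ado (z : SN κ) (t : κ) : SN κ :=
  ⟨fun x => if x = t then z.1 x + 1 else z.1 x, ⟨by
      intro x; dsimp only; split
      · exact le_trans (z.2.1 x) (Nat.le_succ _)
      · exact z.2.1 x,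
    (z.2.2.union (Set.finite_singleton t)).subset (by
      intro x hx
      simp only [Set.mem_setOf_eq] at hx
      by_cases hxt : x = t
      · exact Or.inr hxt
      · left; simpa [hxt] using hx)⟩⟩

lemma ado_apply (z : SN κ) (t x : κ) :
    (ado z t).1 x = if x = t then z.1 x + 1 else z.1 x := rfl

lemma le_ado (z : SN κ) (t : κ) : z ≤ ado z t := by
  intro x; rw [ado_apply]; split
  · exact Nat.le_succ _
  · exact le_refl _

lemma ado_ne (z : SN κ) (t : κ) : ado z t ≠ z := by
  intro h
  have := congrArg (fun u : SN κ => u.1 t) h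
  simp [ado_apply] at this

lemma between_ado {z m : SN κ} {t : κ} (h1 : z ≤ m) (h2 : m ≤ ado z t) :
    m = z ∨ m = ado z t := by
  by_cases ht : m.1 t = z.1 t
  · left
    apply Subtype.ext; funext x
    by_cases hxt : x = t
    · rw [hxt]; exact ht
    · have := h2 x; rw [ado_apply, if_neg hxt] at this
      exact le_antisymm this (h1 x)
  · right
    apply Subtype.ext; funext x
    by_cases hxt : x = t
    · subst hxt
      have h2' : m.1 x ≤ (ado z x).1 x := h2 x
      rw [ado_apply, if_pos rfl] at h2'
      have h1' : z.1 x ≤ m.1 x := h1 x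
      rw [ado_apply, if_pos rfl]
      omega
    · have h2' := h2 x; rw [ado_apply, if_neg hxt] at h2'
      rw [ado_apply, if_neg hxt]
      exact le_antisymm h2' (h1 x)

lemma exists_mid {p q : SN κ} (h : p < q) :
    (∃ t, ado p t = q) ∨ ∃ m, p < m ∧ m < q := by
  have hle : p ≤ q := h.le
  have hne : p ≠ q := h.ne
  have : ∃ t, p.1 t < q.1 t := by
    by_contra hc
    push_neg at hc
    exact hne (Subtype.ext (funext fun x => le_antisymm (hle x) (hc x)))
  obtain ⟨t, ht⟩ := this
  have hmq : ado p t ≤ q := by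
    intro x
    show (ado p t).1 x ≤ q.1 x
    rw [ado_apply]
    split
    · subst ‹x = t›; exact ht
    · exact hle x
  by_cases he : ado p t = q
  · exact Or.inl ⟨t, he⟩
  · exact Or.inr ⟨ado p t, lt_of_le_of_ne (le_ado p t) (Ne.symm (ado_ne p t)), lt_of_le_of_ne hmq he⟩

end Stmt18Aux


namespace Stmt18Aux
variable {κ : Type*}

lemma main_lemma (f : SN κ → SN κ) (a b c : SN κ)
    (hb : ∀ z, a ≤ z → b ≤ f z)
    (hsurj : ∀ w, b ≤ w → ∃ z, a ≤ z ∧ f z = w)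
    (hiff : ∀ z w, a ≤ z → a ≤ w → (z ≤ w ↔ f z ≤ f w))
    (hc : a ≤ c)
    (hfix : ∀ z, c ≤ z → f z = z) :
    ∀ z, a ≤ z → f z = z := by
  classical
  have inj : ∀ z w, a ≤ z → a ≤ w → f z = f w → z = w := by
    intro z w hz hw hfe
    exact le_antisymm ((hiff z w hz hw).2 hfe.le) ((hiff w z hw hz).2 hfe.ge)
  have cover : ∀ z s, a ≤ z → ∃ t, ado (f z) t = f (ado z s) := by
    intro z s hz
    have hza : a ≤ ado z s := hz.trans (le_ado z s)
    have hlt : f z < f (ado z s) := by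
      refine lt_of_le_of_ne ((hiff _ _ hz hza).1 (le_ado z s)) ?_
      intro he
      exact ado_ne z s ((inj _ _ hz hza he).symm)
    rcases exists_mid hlt with ⟨t, ht⟩ | ⟨m, h1, h2⟩
    · exact ⟨t, ht⟩
    · exfalso
      have hbm : b ≤ m := (hb z hz).trans h1.le
      obtain ⟨m', hm'a, rfl⟩ := hsurj m hbm
      have hzm : z ≤ m' := (hiff z m' hz hm'a).2 h1.le
      have hms : m' ≤ ado z s := (hiff m' _ hm'a hza).2 h2.le
      rcases between_ado hzm hms with he | he
      · rw [he] at h1; exact lt_irrefl _ h1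
      · rw [he] at h2; exact lt_irrefl _ h2
  set F : Finset κ := c.2.2.toFinset with hF
  have hmemF : ∀ x, x ∈ F ↔ c.1 x ≠ 1 := fun x => c.2.2.mem_toFinset
  set d : SN κ → ℕ := fun z => ∑ x ∈ F, (c.1 x - z.1 x) with hd
  have hd0 : ∀ z : SN κ, d z = 0 → c ≤ z := by
    intro z h0
    apply le_iff.mpr
    intro x
    by_cases hx : x ∈ F
    · have h1 : c.1 x - z.1 x = 0 := (Finset.sum_eq_zero_iff.mp h0) x hx
      omega
    · have h1 : c.1 x = 1 := by
        by_contra hne; exact hx ((hmemF x).2 hne)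
      rw [h1]; exact z.2.1 x
  have dlt : ∀ (z : SN κ) (y : κ), z.1 y < c.1 y → d (ado z y) < d z := by
    intro z y hy
    have hyF : y ∈ F := (hmemF y).2 (by have := z.2.1 y; omega)
    apply Finset.sum_lt_sum
    · intro i _
      have h1 : z.1 i ≤ (ado z y).1 i := le_ado z y i
      omega
    · refine ⟨y, hyF, ?_⟩
      have h1 : (ado z y).1 y = z.1 y + 1 := by rw [ado_apply, if_pos rfl]
      omega
  have key : ∀ n (z : SN κ), a ≤ z → d z = n → f z = z := by
    intro n
    induction n using Nat.strong_induction_on with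
    | _ n ih =>
      intro z hz hdz
      by_cases hcz : c ≤ z
      · exact hfix z hcz
      have hy : ∃ y, z.1 y < c.1 y := by
        by_contra hcon
        push_neg at hcon
        exact hcz (le_iff.mpr hcon)
      obtain ⟨y, hy⟩ := hy
      have hdv : d (ado z y) < n := hdz ▸ dlt z y hy
      have hav : a ≤ ado z y := hz.trans (le_ado z y)
      have hfv : f (ado z y) = ado z y := ih _ hdv _ hav rfl
      obtain ⟨t, htv⟩ := cover z y hz
      rw [hfv] at htv
      have hco : ∀ x, (f z).1 x + (if x = t then 1 else 0)
          = z.1 x + (if x = y then 1 else 0) := by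
        intro x
        have hx := congrArg (fun u : SN κ => u.1 x) htv
        rw [ado_apply, ado_apply] at hx
        by_cases h1 : x = t
        · rw [if_pos h1] at hx; rw [if_pos h1]
          by_cases h2 : x = y
          · rw [if_pos h2] at hx; rw [if_pos h2]; omega
          · rw [if_neg h2] at hx; rw [if_neg h2]; omega
        · rw [if_neg h1] at hx; rw [if_neg h1]
          by_cases h2 : x = y
          · rw [if_pos h2] at hx; rw [if_pos h2]; omega
          · rw [if_neg h2] at hx; rw [if_neg h2]; omega
      by_cases hty : t = y
      · subst hty
        apply Subtype.ext; funext x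
        have h3 := hco x
        omega
      · exfalso
        rcases lt_trichotomy (z.1 t) (c.1 t) with hlt | heq | hgt
        · -- t deficient
          have hdw : d (ado z t) < n := hdz ▸ dlt z t hlt
          have haw : a ≤ ado z t := hz.trans (le_ado z t)
          have hfw : f (ado z t) = ado z t := ih _ hdw _ haw rfl
          have hle : f z ≤ ado z t := by
            rw [← hfw]
            exact (hiff _ _ hz haw).1 (le_ado z t)
          have h1 : (f z).1 y ≤ (ado z t).1 y := hle y
          rw [ado_apply, if_neg (show ¬ y = t from fun h => hty h.symm)] at h1
          have h3 := hco y
          rw [if_neg (show ¬ y = t from fun h => hty h.symm), if_pos rfl] at h3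
          omega
        · -- z t = c t
          have hau : a ≤ ado z t := hz.trans (le_ado z t)
          have hau' : a ≤ ado (ado z t) y := hau.trans (le_ado _ y)
          have hucox : ∀ x, (ado z t).1 x = z.1 x + (if x = t then 1 else 0) := by
            intro x
            rw [ado_apply]
            by_cases h1 : x = t
            · rw [if_pos h1, if_pos h1]
            · rw [if_neg h1, if_neg h1]; omega
          have hu'co : ∀ x, (ado (ado z t) y).1 x
              = z.1 x + (if x = t then 1 else 0) + (if x = y then 1 else 0) := by
            intro x
            rw [ado_apply]
            by_cases h2 : x = y
            · rw [if_pos h2, hucox x, if_pos h2]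
            · rw [if_neg h2, hucox x, if_neg h2]; omega
          have hdu' : d (ado (ado z t) y) < n := by
            rw [← hdz]
            apply Finset.sum_lt_sum
            · intro i _
              have h1 := hu'co i
              omega
            · refine ⟨y, (hmemF y).2 (by have := z.2.1 y; omega), ?_⟩
              have h1 := hu'co y
              rw [if_neg (show ¬ y = t from fun h => hty h.symm), if_pos rfl] at h1
              omega
          have hfu' : f (ado (ado z t) y) = ado (ado z t) y := ih _ hdu' _ hau' rfl
          obtain ⟨p, hp⟩ := cover z t hz
          obtain ⟨q, hq⟩ := cover (ado z t) y hau
          rw [hfu'] at hq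
          have hpx : ∀ x, (f (ado z t)).1 x = (f z).1 x + (if x = p then 1 else 0) := by
            intro x
            have hx := congrArg (fun w : SN κ => w.1 x) hp
            rw [ado_apply] at hx
            by_cases h1 : x = p
            · rw [if_pos h1] at hx; rw [if_pos h1, ← hx]
            · rw [if_neg h1] at hx; rw [if_neg h1, ← hx]; omega
          have hqx : ∀ x, (ado (ado z t) y).1 x
              = (f (ado z t)).1 x + (if x = q then 1 else 0) := by
            intro x
            have hx := congrArg (fun w : SN κ => w.1 x) hq
            rw [ado_apply] at hx
            by_cases h1 : x = q
            · rw [if_pos h1] at hx; rw [if_pos h1, ← hx]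
            · rw [if_neg h1] at hx; rw [if_neg h1, ← hx]; omega
          have hind : ∀ x, (if x = p then 1 else 0) + (if x = q then 1 else 0)
              = (if x = t then 1 else 0) + (if x = t then 1 else 0) := by
            intro x
            have e1 := hpx x
            have e2 := hqx x
            have e3 := hu'co x
            have e4 := hco x
            omega
          have hpt : p = t := by
            by_contra hne
            have h1 := hind p
            by_cases hpq : p = q
            · rw [if_pos (rfl : p = p), if_pos hpq, if_neg hne] at h1; omega
            · rw [if_pos (rfl : p = p), if_neg hpq, if_neg hne] at h1; omega
          have hqt : q = t := by
            by_contra hne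
            have h1 := hind q
            by_cases hqp : q = p
            · rw [if_pos hqp, if_pos (rfl : q = q), if_neg hne] at h1; omega
            · rw [if_neg hqp, if_pos (rfl : q = q), if_neg hne] at h1; omega
          have hfuv : f (ado z t) = ado z y := by
            apply Subtype.ext; funext x
            have e1 := hpx x
            rw [hpt] at e1
            have e4 := hco x
            rw [ado_apply]
            by_cases h2 : x = y
            · rw [if_pos h2]
              rw [if_pos h2] at e4
              by_cases h1 : x = t
              · rw [if_pos h1] at e1 e4; omega
              · rw [if_neg h1] at e1 e4; omega
            · rw [if_neg h2]
              rw [if_neg h2] at e4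
              by_cases h1 : x = t
              · rw [if_pos h1] at e1 e4; omega
              · rw [if_neg h1] at e1 e4; omega
          have huv : ado z t = ado z y := by
            apply inj _ _ hau hav
            rw [hfuv, hfv]
          have h1 := congrArg (fun w : SN κ => w.1 t) huv
          rw [ado_apply, ado_apply, if_pos rfl, if_neg hty] at h1
          omega
        · -- z t > c t
          have hg : c ≤ ssup (f z) c := le_ssup_right _ _
          have hag : a ≤ ssup (f z) c := hc.trans hg
          have hfg : f (ssup (f z) c) = ssup (f z) c := hfix _ hg
          have hzg : z ≤ ssup (f z) c := by
            refine (hiff z _ hz hag).2 ?_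
            rw [hfg]
            exact le_ssup_left _ _
          have h1 : z.1 t ≤ (ssup (f z) c).1 t := hzg t
          have h2 := hco t
          rw [if_pos rfl, if_neg hty] at h2
          have h3 : (ssup (f z) c).1 t = max ((f z).1 t) (c.1 t) := rfl
          have h4 : max ((f z).1 t) (c.1 t) < z.1 t := max_lt (by omega) hgt
          omega
  intro z hz
  exact key (d z) z hz rfl

end Stmt18Aux

namespace Stmt18Aux
variable {κ : Type*}

lemma idem_id (ε : SN κ →. SN κ) (hε : IsIPF ε) (hidem : ε.comp ε = ε) :
    ∀ z (hz : z ∈ ε.Dom), ε.fn z hz = z := by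
  obtain ⟨e, e', hdom, hran, hmono⟩ := hε
  intro z hz
  have hmem : ε.fn z hz ∈ ε z := Part.get_mem hz
  have hmem2 : ε.fn z hz ∈ (ε.comp ε) z := by rw [hidem]; exact hmem
  rw [PFun.comp_apply] at hmem2
  replace hmem2 := Part.mem_bind_iff.mp hmem2
  obtain ⟨m, hm1, hm2⟩ := hmem2
  have hgz : ε.fn z hz = m := Part.get_eq_of_mem hm1 hz
  have hw : m ∈ ε.Dom := (PFun.mem_dom ε m).2 ⟨_, hm2⟩
  have hfw : ε.fn m hw = m := (Part.get_eq_of_mem hm2 hw).trans hgz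
  have h1 : m ≤ z := (hmono m z hw hz).2 (by rw [hfw, hgz])
  have h2 : z ≤ m := (hmono z m hz hw).2 (by rw [hfw, hgz])
  rw [hgz]
  exact le_antisymm h1 h2
end Stmt18Aux

open Stmt18Aux in
theorem stmt18aux {κ : Type*} [Infinite κ] (α ε : SN κ →. SN κ)
    (hα : IsIPF α) (hε : IsIPF ε) (hidem : ε.comp ε = ε)
    (h : (ε.comp α).comp (ε.comp α) = ε.comp α) :
    α.comp α = α := by
  classical
  obtain ⟨a, b, hdomα, hranα, hmonoα⟩ := hα
  have hεid := Stmt18Aux.idem_id ε hε hidem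
  obtain ⟨e, e', hdomε, hranε, hmonoε⟩ := hε
  have hfnran : ∀ z (hz : z ∈ α.Dom), b ≤ α.fn z hz := by
    intro z hz
    have hm : α.fn z hz ∈ α.ran := ⟨z, Part.get_mem hz⟩
    rw [hranα] at hm
    exact hm
  have hsurjα : ∀ w, b ≤ w → ∃ z, ∃ hz : z ∈ α.Dom, α.fn z hz = w := by
    intro w hw
    have hm : w ∈ α.ran := by rw [hranα]; exact hw
    obtain ⟨x, hx⟩ := hm
    have hxd : x ∈ α.Dom := (PFun.mem_dom α x).2 ⟨w, hx⟩
    exact ⟨x, hxd, Part.get_eq_of_mem hx hxd⟩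
  set γ := ε.comp α with hγ
  have hγmem : ∀ (z : SN κ) (hz : z ∈ γ.Dom), ∃ (h1 : z ∈ α.Dom)
      (_ : α.fn z h1 ∈ ε.Dom), γ.fn z hz = α.fn z h1 := by
    intro z hz
    have hmem : γ.fn z hz ∈ (α z).bind ε := Part.get_mem hz
    replace hmem := Part.mem_bind_iff.mp hmem
    obtain ⟨m, hm1, hm2⟩ := hmem
    have h1 : z ∈ α.Dom := (PFun.mem_dom α z).2 ⟨m, hm1⟩
    have hget : α.fn z h1 = m := Part.get_eq_of_mem hm1 h1
    have hmd : m ∈ ε.Dom := (PFun.mem_dom ε m).2 ⟨_, hm2⟩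
    have h2 : α.fn z h1 ∈ ε.Dom := by rw [hget]; exact hmd
    refine ⟨h1, h2, ?_⟩
    have h3 : ε.fn m hmd = γ.fn z hz := Part.get_eq_of_mem hm2 hmd
    have h4 : ε.fn m hmd = m := hεid m hmd
    rw [← h3, h4, hget]
  have hγdommem : ∀ z : SN κ, z ∈ γ.Dom ↔ ∃ h1 : z ∈ α.Dom, α.fn z h1 ∈ ε.Dom := by
    intro z
    constructor
    · intro hz; obtain ⟨h1, h2, _⟩ := hγmem z hz; exact ⟨h1, h2⟩
    · rintro ⟨h1, h2⟩
      rw [hγ]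
      apply (PFun.mem_dom _ z).2
      refine ⟨ε.fn (α.fn z h1) h2, ?_⟩
      rw [PFun.comp_apply]
      apply Part.mem_bind_iff.mpr
      exact ⟨α.fn z h1, Part.get_mem h1, Part.get_mem h2⟩
  have hsb : b ≤ ssup e b := le_ssup_right e b
  obtain ⟨a', ha'dom, hfa'⟩ := hsurjα _ hsb
  have ha'a : a ≤ a' := by rw [hdomα] at ha'dom; exact ha'dom
  have hγdom : γ.Dom = {z | a' ≤ z} := by
    ext z
    rw [Set.mem_setOf_eq, hγdommem]
    constructor
    · rintro ⟨h1, h2⟩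
      have hbe : e ≤ α.fn z h1 := by rw [hdomε] at h2; exact h2
      have hsup : ssup e b ≤ α.fn z h1 := ssup_le hbe (hfnran z h1)
      exact (hmonoα a' z ha'dom h1).2 (by rw [hfa']; exact hsup)
    · intro hz
      have h1 : z ∈ α.Dom := by rw [hdomα]; exact ha'a.trans hz
      refine ⟨h1, ?_⟩
      rw [hdomε]
      have h5 := (hmonoα a' z ha'dom h1).1 hz
      rw [hfa'] at h5
      exact (le_ssup_left e b).trans h5
  have hγran : γ.ran = {z | ssup e b ≤ z} := by
    ext w
    rw [Set.mem_setOf_eq]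
    constructor
    · rintro ⟨x, hx⟩
      have hxd : x ∈ γ.Dom := (PFun.mem_dom γ x).2 ⟨w, hx⟩
      obtain ⟨h1, h2, h3⟩ := hγmem x hxd
      have hw : γ.fn x hxd = w := Part.get_eq_of_mem hx hxd
      have hbe : e ≤ α.fn x h1 := by rw [hdomε] at h2; exact h2
      rw [← hw, h3]
      exact ssup_le hbe (hfnran x h1)
    · intro hw
      obtain ⟨x, hxd, hxf⟩ := hsurjα w (hsb.trans hw)
      have h2 : α.fn x hxd ∈ ε.Dom := by
        rw [hdomε, hxf]
        exact (le_ssup_left e b).trans hw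
      have hxγ : x ∈ γ.Dom := (hγdommem x).2 ⟨hxd, h2⟩
      obtain ⟨h1', h2', h3⟩ := hγmem x hxγ
      refine ⟨x, ?_⟩
      have h4 : γ.fn x hxγ = w := by rw [h3]; exact hxf
      exact h4 ▸ Part.get_mem hxγ
  have hγmono : ∀ (z w : SN κ) (hz : z ∈ γ.Dom) (hw : w ∈ γ.Dom),
      z ≤ w ↔ γ.fn z hz ≤ γ.fn w hw := by
    intro z w hz hw
    obtain ⟨h1, h2, h3⟩ := hγmem z hz
    obtain ⟨h1', h2', h3'⟩ := hγmem w hw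
    rw [h3, h3']
    exact hmonoα z w h1 h1'
  have hγid := Stmt18Aux.idem_id γ ⟨a', ssup e b, hγdom, hγran, hγmono⟩ h
  have hfixα : ∀ z (hz : z ∈ α.Dom), a' ≤ z → α.fn z hz = z := by
    intro z hz ha'z
    have hγz : z ∈ γ.Dom := by rw [hγdom]; exact ha'z
    obtain ⟨h1, h2, h3⟩ := hγmem z hγz
    have h4 := hγid z hγz
    rw [h3] at h4
    exact h4
  set Fc : SN κ → SN κ := fun z => if hzz : z ∈ α.Dom then α.fn z hzz else z with hFc
  have hFdom : ∀ z (hz : z ∈ α.Dom), Fc z = α.fn z hz := by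
    intro z hz; rw [hFc]; dsimp only; rw [dif_pos hz]
  have hid : ∀ z (hz : z ∈ α.Dom), α.fn z hz = z := by
    have hmain := Stmt18Aux.main_lemma Fc a b a'
      (fun z hz => by
        rw [hFdom z (by rw [hdomα]; exact hz)]
        exact hfnran _ _)
      (fun w hw => by
        obtain ⟨x, hxd, hxf⟩ := hsurjα w hw
        exact ⟨x, by rw [hdomα] at hxd; exact hxd, by rw [hFdom x hxd]; exact hxf⟩)
      (fun z w hz hw => by
        rw [hFdom z (by rw [hdomα]; exact hz), hFdom w (by rw [hdomα]; exact hw)]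
        exact hmonoα z w _ _)
      ha'a
      (fun z hz => by
        rw [hFdom z (by rw [hdomα]; exact ha'a.trans hz)]
        exact hfixα z _ hz)
    intro z hz
    have h2 := hmain z (by rw [hdomα] at hz; exact hz)
    rw [hFdom z hz] at h2
    exact h2
  apply PFun.ext
  intro x y
  rw [PFun.comp_apply]
  refine Part.mem_bind_iff.trans ?_
  constructor
  · rintro ⟨m, hm1, hm2⟩
    have hxd : x ∈ α.Dom := (PFun.mem_dom α x).2 ⟨m, hm1⟩
    have hmx : m = x := by rw [← Part.get_eq_of_mem hm1 hxd]; exact hid x hxd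
    rwa [hmx] at hm2
  · intro hy
    have hxd : x ∈ α.Dom := (PFun.mem_dom α x).2 ⟨y, hy⟩
    have hyx : y = x := by rw [← Part.get_eq_of_mem hy hxd]; exact hid x hxd
    refine ⟨x, ?_, hy⟩
    have hxx := hy
    rw [hyx] at hxx
    exact hxx

/-- `IPF(σℕ^κ)` is E-unitary: if `α ε` is idempotent for some idempotent `ε`
(products left-to-right, so `α ε` is `ε.comp α`), then `α` is idempotent. -/
theorem stmt18 {κ : Type*} [Infinite κ] (α ε : SN κ →. SN κ)
    (hα : IsIPF α) (hε : IsIPF ε) (hidem : ε.comp ε = ε)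
    (h : (ε.comp α).comp (ε.comp α) = ε.comp α) :
    α.comp α = α := stmt18aux α ε hα hε hidem h
end

section
/- For any infinite cardinal κ, the quotient of IPF(σℕ^κ) by its least group congruence C_mg (where α C_mg β iff αε = βε for some idempotent ε) is isomorphic to the semidirect product S_κ ⋉ σℤ^κ of the group (σℤ^κ, +) by S_κ, where σℤ^κ consists of functions κ → ℤ with finite support, S_κ acts by z ↦ z ∘ g⁻¹, and the product is (g,m)(h,n) = (gh, m∘h⁻¹ + n). -/
open scoped Classical

/-- The least group congruence on `IPF(σℕ^κ)`: `α C_mg β` iff `α ε = β ε` for some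
idempotent `ε` (products left-to-right, so `α ε` is `ε.comp α`). -/
def Cmg {κ : Type*} (α β : SN κ →. SN κ) : Prop :=
  ∃ ε : SN κ →. SN κ, IsIPF ε ∧ ε.comp ε = ε ∧ ε.comp α = ε.comp β

/-- The multiplication of the semidirect product `S_κ ⋉ (σℤ^κ, +)`:
`(g,m)(h,n) = (gh, m ∘ h⁻¹ + n)`, where `g.trans h` applies `g` first and
`σℤ^κ` is the group `κ →₀ ℤ` of finitely supported functions. -/
noncomputable def sdZ {κ : Type*} (u v : Equiv.Perm κ × (κ →₀ ℤ)) :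
    Equiv.Perm κ × (κ →₀ ℤ) :=
  (u.1.trans v.1, Finsupp.equivMapDomain v.1 u.2 + v.2)

open Finsupp

namespace S19
variable {κ : Type*}

lemma eq_single_of_le_single {l : κ →₀ ℕ} {x : κ} {n : ℕ}
    (h : l ≤ Finsupp.single x n) : l = Finsupp.single x (l x) := by
  ext y
  by_cases hy : y = x
  · subst hy; simp
  · have h' := Finsupp.le_def.mp h y
    rw [Finsupp.single_eq_of_ne' (Ne.symm hy)] at h' ⊢
    omega

/-- "below it is a chain" predicate -/
def IsSL (l : κ →₀ ℕ) : Prop := ∀ u v : κ →₀ ℕ, u ≤ l → v ≤ l → u ≤ v ∨ v ≤ u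

lemma isSL_single (x : κ) (n : ℕ) : IsSL (Finsupp.single x n) := by
  intro u v hu hv
  rcases le_total (u x) (v x) with h | h
  · left
    rw [eq_single_of_le_single hu, eq_single_of_le_single hv]
    rw [Finsupp.single_le_iff, Finsupp.single_eq_same]; exact h
  · right
    rw [eq_single_of_le_single hu, eq_single_of_le_single hv]
    rw [Finsupp.single_le_iff, Finsupp.single_eq_same]; exact h

lemma isSL_exists [Nonempty κ] {l : κ →₀ ℕ} (h : IsSL l) :
    ∃ x, l = Finsupp.single x (l x) := by
  by_cases h0 : l = 0
  · exact ⟨Classical.arbitrary κ, by simp [h0]⟩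
  · obtain ⟨x, hx⟩ := Finsupp.support_nonempty_iff.mpr h0
    refine ⟨x, ?_⟩
    ext y
    by_cases hy : y = x
    · subst hy; simp
    · rw [Finsupp.single_eq_of_ne' (Ne.symm hy)]
      by_contra hne
      have hy' : l y ≠ 0 := hne
      have hu : Finsupp.single x (l x) ≤ l := Finsupp.single_le_iff.mpr le_rfl
      have hv : Finsupp.single y (l y) ≤ l := Finsupp.single_le_iff.mpr le_rfl
      have hx' : l x ≠ 0 := Finsupp.mem_support_iff.mp hx
      rcases h _ _ hu hv with hc | hc
      · have := Finsupp.le_def.mp hc x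
        rw [Finsupp.single_eq_same, Finsupp.single_eq_of_ne' hy] at this
        omega
      · have := Finsupp.le_def.mp hc y
        rw [Finsupp.single_eq_same, Finsupp.single_eq_of_ne' (Ne.symm hy)] at this
        omega

variable (F : (κ →₀ ℕ) ≃o (κ →₀ ℕ))

lemma map_zero' : F 0 = 0 := by
  have h : (⊥ : κ →₀ ℕ) = 0 := rfl
  rw [← h, F.map_bot]

lemma isSL_map {l : κ →₀ ℕ} (h : IsSL l) : IsSL (F l) := by
  intro u v hu hv
  have hu' : F.symm u ≤ l := by
    have := F.symm.monotone hu; rwa [F.symm_apply_apply] at this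
  have hv' : F.symm v ≤ l := by
    have := F.symm.monotone hv; rwa [F.symm_apply_apply] at this
  rcases h _ _ hu' hv' with hc | hc
  · left; have := F.monotone hc; rwa [F.apply_symm_apply, F.apply_symm_apply] at this
  · right; have := F.monotone hc; rwa [F.apply_symm_apply, F.apply_symm_apply] at this

lemma singles [Nonempty κ] (x : κ) :
    ∃ y, ∀ n, F (Finsupp.single x n) = Finsupp.single y ((F (Finsupp.single x n)) y) := by
  obtain ⟨y, hy⟩ := isSL_exists (isSL_map F (isSL_single x 1))
  refine ⟨y, fun n => ?_⟩
  rcases Nat.eq_zero_or_pos n with hn | hn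
  · subst hn
    rw [Finsupp.single_zero, map_zero' F]
    simp
  · obtain ⟨yn, hyn⟩ := isSL_exists (isSL_map F (isSL_single x n))
    have h1 : F (Finsupp.single x 1) ≤ F (Finsupp.single x n) :=
      F.monotone (Finsupp.single_le_iff.mpr (by simp; omega))
    have hne : F (Finsupp.single x 1) ≠ 0 := by
      intro hc
      have : Finsupp.single x 1 = (0 : κ →₀ ℕ) := by
        have := F.injective (hc.trans (map_zero' F).symm)
        exact this
      exact one_ne_zero (Finsupp.single_eq_zero.mp this)
    have hvy : (F (Finsupp.single x 1)) y ≠ 0 := by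
      intro hc
      rw [hy, hc, Finsupp.single_zero] at hne
      exact hne rfl
    have hle := Finsupp.le_def.mp h1 y
    have hyny : (F (Finsupp.single x n)) y ≠ 0 := by omega
    have : y = yn := by
      by_contra hne'
      rw [hyn, Finsupp.single_eq_of_ne' (Ne.symm hne')] at hyny
      exact hyny rfl
    rw [← this] at hyn
    exact hyn

lemma single_apply_lt {y : κ} {a b : ℕ} (h : Finsupp.single y a < Finsupp.single y b) : a < b := by
  have hle := Finsupp.le_def.mp h.le y
  rw [Finsupp.single_eq_same, Finsupp.single_eq_same] at hle
  rcases lt_or_eq_of_le hle with h' | h'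
  · exact h'
  · exact absurd (by rw [h']) h.ne

lemma eval_strictMono [Nonempty κ] (x y : κ)
    (hy : ∀ n, F (Finsupp.single x n) = Finsupp.single y ((F (Finsupp.single x n)) y)) :
    StrictMono (fun n => (F (Finsupp.single x n)) y) := by
  intro n m hnm
  have hlt : Finsupp.single x n < Finsupp.single x m := by
    constructor
    · exact Finsupp.single_le_iff.mpr (by simp [hnm.le])
    · intro hc
      have := Finsupp.le_def.mp hc x
      simp only [Finsupp.single_eq_same] at this
      omega
  have := F.strictMono hlt
  rw [hy n, hy m] at this
  exact single_apply_lt this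

lemma singles' [Nonempty κ] (x : κ) :
    ∃ y, ∀ n, F (Finsupp.single x n) = Finsupp.single y n := by
  obtain ⟨y, hy⟩ := singles F x
  obtain ⟨x', hx'⟩ := singles F.symm y
  set c : ℕ → ℕ := fun n => (F (Finsupp.single x n)) y with hc
  set d : ℕ → ℕ := fun n => (F.symm (Finsupp.single y n)) x' with hd
  have hcmono : StrictMono c := eval_strictMono F x y hy
  have hdmono : StrictMono d := eval_strictMono F.symm y x' hx'
  have hsymm : ∀ n, Finsupp.single x n = Finsupp.single x' (d (c n)) := by
    intro n
    have h1 : F.symm (F (Finsupp.single x n)) = Finsupp.single x n := F.symm_apply_apply _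
    rw [hy n, hx' (c n)] at h1
    exact h1.symm
  have hx'x : x' = x := by
    have h1 := hsymm 1
    rcases (Finsupp.single_eq_single_iff _ _ _ _).mp h1 with ⟨h2, _⟩ | ⟨h2, _⟩
    · exact h2.symm
    · exact absurd h2 one_ne_zero
  have hdc : ∀ n, d (c n) = n := by
    intro n
    have h1 := hsymm n
    rw [hx'x] at h1
    have h2 : (Finsupp.single x n) x = (Finsupp.single x (d (c n))) x := by rw [← h1]
    rw [Finsupp.single_eq_same, Finsupp.single_eq_same] at h2
    omega
  have hcn : ∀ n, c n = n := by
    intro n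
    have h1 : n ≤ c n := hcmono.le_apply
    have h2 : c n ≤ d (c n) := hdmono.le_apply
    have h3 := hdc n
    omega
  refine ⟨y, fun n => ?_⟩
  rw [hy n]
  show Finsupp.single y (c n) = _
  rw [hcn]

lemma sup_eq_add (t : κ) (n : ℕ) (f : κ →₀ ℕ) (h : f t = 0) :
    Finsupp.single t n ⊔ f = Finsupp.single t n + f := by
  ext y
  rw [Finsupp.sup_apply, Finsupp.add_apply]
  by_cases hy : y = t
  · subst hy; simp [h]
  · rw [Finsupp.single_eq_of_ne' (Ne.symm hy)]; simp

theorem key [Nonempty κ] : ∃ g : Equiv.Perm κ, ∀ l, F l = Finsupp.equivMapDomain g l := by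
  have hfull : ∀ (G : (κ →₀ ℕ) ≃o (κ →₀ ℕ)) (x : κ), ∃ y, ∀ n,
      G (Finsupp.single x n) = Finsupp.single y n := fun G x => singles' G x
  choose gf hgf using hfull F
  choose gf' hgf' using hfull F.symm
  have single_inj : ∀ (a b : κ), Finsupp.single a (1:ℕ) = Finsupp.single b 1 → a = b := by
    intro a b h
    rcases (Finsupp.single_eq_single_iff _ _ _ _).mp h with ⟨h2, _⟩ | ⟨h2, _⟩
    · exact h2
    · exact absurd h2 one_ne_zero
  have hleft : ∀ x, gf' (gf x) = x := by
    intro x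
    have h1 : F.symm (F (Finsupp.single x (1:ℕ))) = Finsupp.single x 1 := F.symm_apply_apply _
    rw [hgf x 1, hgf' (gf x) 1] at h1
    exact single_inj _ _ h1
  have hright : ∀ y, gf (gf' y) = y := by
    intro y
    have h1 : F (F.symm (Finsupp.single y (1:ℕ))) = Finsupp.single y 1 := F.apply_symm_apply _
    rw [hgf' y 1, hgf (gf' y) 1] at h1
    exact single_inj _ _ h1
  refine ⟨⟨gf, gf', hleft, hright⟩, fun l => ?_⟩
  induction l using Finsupp.induction with
  | zero => rw [map_zero' F]; ext y; simp
  | single_add x n f hxf hn IH =>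
    have hfx : f x = 0 := Finsupp.notMem_support_iff.mp hxf
    have h1 : Finsupp.single x n ⊔ f = Finsupp.single x n + f := sup_eq_add x n f hfx
    have h2 : (Finsupp.equivMapDomain (⟨gf, gf', hleft, hright⟩ : Equiv.Perm κ) f) (gf x) = 0 := by
      rw [Finsupp.equivMapDomain_apply]
      show f _ = 0
      convert hfx using 2
      exact hleft x
    have hL : F (Finsupp.single x n + f) =
        Finsupp.single (gf x) n +
          Finsupp.equivMapDomain (⟨gf, gf', hleft, hright⟩ : Equiv.Perm κ) f := by
      rw [← h1, map_sup, hgf x n, IH, sup_eq_add _ _ _ h2]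
    rw [hL]
    ext y
    simp only [Finsupp.add_apply, Finsupp.equivMapDomain_apply]
    have hs : Finsupp.single (gf x) n y = Finsupp.single x n
        ((⟨gf, gf', hleft, hright⟩ : Equiv.Perm κ).symm y) := by
      show _ = Finsupp.single x n (gf' y)
      by_cases hy : y = gf x
      · subst hy
        rw [Finsupp.single_eq_same, hleft x, Finsupp.single_eq_same]
      · rw [Finsupp.single_eq_of_ne' (Ne.symm hy), Finsupp.single_eq_of_ne']
        intro hc
        exact hy (by rw [hc, hright y])
    rw [hs]

end S19

namespace S19
variable {κ : Type*}

lemma SN.le_iff {z w : SN κ} : z ≤ w ↔ ∀ x, z.1 x ≤ w.1 x := Iff.rfl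

lemma SN.one_le (z : SN κ) (x : κ) : 1 ≤ z.1 x := z.2.1 x

lemma SN.fin (z : SN κ) : {x | z.1 x ≠ 1}.Finite := z.2.2

/-- the equivalence between the principal filter over `a` and `κ →₀ ℕ` -/
noncomputable def filEquiv (a : SN κ) : {z : SN κ // a ≤ z} ≃ (κ →₀ ℕ) where
  toFun z := Finsupp.ofSupportFinite (fun x => z.1.1 x - a.1 x) (by
    apply Set.Finite.subset (Set.Finite.union (SN.fin z.1) (SN.fin a))
    intro x hx
    simp only [Function.mem_support] at hx
    rw [Set.mem_union, Set.mem_setOf_eq, Set.mem_setOf_eq]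
    by_contra hc
    push_neg at hc
    obtain ⟨h1, h2⟩ := hc
    omega)
  invFun l := ⟨⟨fun x => a.1 x + l x, fun x => le_add_right (SN.one_le a x),
      (by
        apply Set.Finite.subset (Set.Finite.union (SN.fin a) l.finite_support)
        intro x hx
        simp only [Set.mem_setOf_eq] at hx
        rw [Set.mem_union, Set.mem_setOf_eq]
        by_contra hc
        push_neg at hc
        obtain ⟨h1, h2⟩ := hc
        rw [Function.mem_support, not_not] at h2
        omega)⟩,
    fun x => le_add_right le_rfl⟩
  left_inv z := by
    apply Subtype.ext; apply Subtype.ext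
    funext x
    have : a.1 x ≤ z.1.1 x := z.2 x
    show a.1 x + (z.1.1 x - a.1 x) = z.1.1 x
    omega
  right_inv l := by
    ext x
    show (a.1 x + l x) - a.1 x = l x
    omega
lemma filEquiv_apply (a : SN κ) (z : {z : SN κ // a ≤ z}) (x : κ) :
    filEquiv a z x = z.1.1 x - a.1 x := rfl

/-- the order isomorphism between the principal filter over `a` and `κ →₀ ℕ` -/
noncomputable def fil (a : SN κ) : {z : SN κ // a ≤ z} ≃o (κ →₀ ℕ) :=
  { filEquiv a with
    map_rel_iff' := by
      intro z w
      show filEquiv a z ≤ filEquiv a w ↔ _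
      rw [Finsupp.le_def]
      constructor
      · intro h x
        show z.1.1 x ≤ w.1.1 x
        have h' := h x
        rw [filEquiv_apply, filEquiv_apply] at h'
        have h1 : a.1 x ≤ z.1.1 x := z.2 x
        have h2 : a.1 x ≤ w.1.1 x := w.2 x
        omega
      · intro h x
        have h' : z.1.1 x ≤ w.1.1 x := h x
        rw [filEquiv_apply, filEquiv_apply]
        omega }

lemma fil_apply (a : SN κ) (z : {z : SN κ // a ≤ z}) (x : κ) :
    fil a z x = z.1.1 x - a.1 x := rfl

lemma fil_symm_apply (a : SN κ) (l : κ →₀ ℕ) (x : κ) :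
    ((fil a).symm l).1.1 x = a.1 x + l x := rfl

/-- The defining specification of the invariant pair `(g, M)` of an IPF. -/
def Spec (α : SN κ →. SN κ) (p : Equiv.Perm κ × (κ →₀ ℤ)) : Prop :=
  ∀ z (hz : z ∈ α.Dom) (y : κ),
    ((α.fn z hz).1 y : ℤ) = (z.1 (p.1.symm y) : ℤ) + p.2 y

lemma exists_spec [Nonempty κ] {α : SN κ →. SN κ} (hα : IsIPF α) : ∃ p, Spec α p := by
  obtain ⟨a, b, hdom, hran, hmono⟩ := hα
  have hdz : ∀ z : SN κ, a ≤ z → z ∈ α.Dom := fun z h => by rw [hdom]; exact h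
  have hrz : ∀ z (hz : z ∈ α.Dom), b ≤ α.fn z hz := by
    intro z hz
    have : α.fn z hz ∈ α.ran := ⟨z, Part.get_mem _⟩
    rwa [hran] at this
  set f : {z : SN κ // a ≤ z} → {z : SN κ // b ≤ z} :=
    fun z => ⟨α.fn z.1 (hdz _ z.2), hrz _ _⟩ with hf
  have hinj : Function.Injective f := by
    intro z w h
    have h' : α.fn z.1 (hdz _ z.2) = α.fn w.1 (hdz _ w.2) := congrArg Subtype.val h
    apply Subtype.ext
    exact le_antisymm ((hmono z.1 w.1 _ _).mpr (le_of_eq h'))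
      ((hmono w.1 z.1 _ _).mpr (le_of_eq h'.symm))
  have hsurj : Function.Surjective f := by
    intro w
    have hw : w.1 ∈ α.ran := by rw [hran]; exact w.2
    obtain ⟨z, hz⟩ := hw
    have hzd : z ∈ α.Dom := (PFun.mem_dom α z).mpr ⟨w.1, hz⟩
    have haz : a ≤ z := by rwa [hdom] at hzd
    refine ⟨⟨z, haz⟩, Subtype.ext ?_⟩
    exact Part.get_eq_of_mem hz _
  set A : {z : SN κ // a ≤ z} ≃o {z : SN κ // b ≤ z} :=
    RelIso.mk (Equiv.ofBijective f ⟨hinj, hsurj⟩) (by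
      intro z w
      show f z ≤ f w ↔ z ≤ w
      exact ⟨fun h => (hmono z.1 w.1 _ _).mpr h, fun h => (hmono z.1 w.1 _ _).mp h⟩) with hA
  obtain ⟨g, hg⟩ := key (((fil a).symm.trans A).trans (fil b))
  have hMfin : (Function.support (fun y => (b.1 y : ℤ) - (a.1 (g.symm y) : ℤ))).Finite := by
    apply Set.Finite.subset (Set.Finite.union (SN.fin b)
      (Set.Finite.preimage (Set.injOn_of_injective g.symm.injective) (SN.fin a)))
    intro y hy
    simp only [Function.mem_support] at hy
    rw [Set.mem_union, Set.mem_setOf_eq, Set.mem_preimage, Set.mem_setOf_eq]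
    by_contra hc
    push_neg at hc
    obtain ⟨h1, h2⟩ := hc
    rw [h1, h2] at hy
    simp at hy
  set M : κ →₀ ℤ := Finsupp.ofSupportFinite _ hMfin with hM
  refine ⟨⟨g, M⟩, ?_⟩
  intro z hz y
  have haz : a ≤ z := by rw [hdom] at hz; exact hz
  set zz : {z : SN κ // a ≤ z} := ⟨z, haz⟩ with hzz
  have h1 := hg (fil a zz)
  rw [OrderIso.trans_apply, OrderIso.trans_apply, OrderIso.symm_apply_apply] at h1
  have h3 : A zz = (fil b).symm (Finsupp.equivMapDomain g (fil a zz)) := by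
    rw [← h1, OrderIso.symm_apply_apply]
  have h5 : (A zz).1.1 y = b.1 y + (z.1 (g.symm y) - a.1 (g.symm y)) := by
    rw [h3]
    rw [fil_symm_apply, Finsupp.equivMapDomain_apply, fil_apply]
  have h6 : α.fn z hz = (A zz).1 := rfl
  have hMy : M y = (b.1 y : ℤ) - (a.1 (g.symm y) : ℤ) := rfl
  rw [h6, hMy]
  have hle : a.1 (g.symm y) ≤ z.1 (g.symm y) := haz _
  show ((A zz).1.1 y : ℤ) = _
  rw [h5]
  push_cast
  omega


/-- increment one coordinate -/
noncomputable def bump (z : SN κ) (t : κ) : SN κ :=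
  ⟨fun x => if x = t then z.1 x + 1 else z.1 x,
   fun x => by dsimp only; split <;> [omega; exact z.2.1 x],
   by
    apply Set.Finite.subset ((SN.fin z).union (Set.finite_singleton t))
    intro x hx
    simp only [Set.mem_setOf_eq] at hx
    rw [Set.mem_union, Set.mem_setOf_eq, Set.mem_singleton_iff]
    by_contra hc
    push_neg at hc
    obtain ⟨h1, h2⟩ := hc
    rw [if_neg h2] at hx
    exact hx h1⟩

lemma bump_le (z : SN κ) (t : κ) : z ≤ bump z t := by
  intro x
  show z.1 x ≤ (bump z t).1 x
  show z.1 x ≤ if x = t then z.1 x + 1 else z.1 x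
  split <;> omega

lemma bump_apply (z : SN κ) (t x : κ) :
    (bump z t).1 x = if x = t then z.1 x + 1 else z.1 x := rfl

lemma spec_unique {α : SN κ →. SN κ} (hα : IsIPF α) {p q : Equiv.Perm κ × (κ →₀ ℤ)}
    (hp : Spec α p) (hq : Spec α q) : p = q := by
  obtain ⟨a, b, hdom, hran, hmono⟩ := hα
  have ha : a ∈ α.Dom := by rw [hdom]; show a ≤ a; exact le_rfl
  have hbt : ∀ t, bump a t ∈ α.Dom := fun t => by rw [hdom]; exact bump_le a t
  have key2 : ∀ z (hz : z ∈ α.Dom) (y : κ),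
      (z.1 (p.1.symm y) : ℤ) + p.2 y = (z.1 (q.1.symm y) : ℤ) + q.2 y :=
    fun z hz y => by rw [← hp z hz y, ← hq z hz y]
  have hsymm : ∀ y, p.1.symm y = q.1.symm y := by
    intro y
    set u := p.1.symm y with hu
    set v := q.1.symm y with hv
    have E1 := key2 a ha y
    have E2 := key2 (bump a u) (hbt u) y
    rw [← hu, ← hv] at E1 E2
    rw [bump_apply, bump_apply, if_pos rfl] at E2
    by_contra hne
    rw [if_neg (fun hc : v = u => hne hc.symm)] at E2
    omega
  have hg : p.1 = q.1 := by
    have : p.1.symm = q.1.symm := Equiv.ext hsymm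
    have := congrArg Equiv.symm this
    rwa [Equiv.symm_symm, Equiv.symm_symm] at this
  have hm : p.2 = q.2 := by
    ext y
    have E1 := key2 a ha y
    rw [hsymm y] at E1
    omega
  exact Prod.ext hg hm

lemma fn_bot {α : SN κ →. SN κ} {a b : SN κ} (hdom : α.Dom = {z | a ≤ z})
    (hran : α.ran = {z | b ≤ z})
    (hmono : ∀ (z w : SN κ) (hz : z ∈ α.Dom) (hw : w ∈ α.Dom),
      z ≤ w ↔ α.fn z hz ≤ α.fn w hw)
    (ha : a ∈ α.Dom) : α.fn a ha = b := by
  apply le_antisymm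
  · have hb : b ∈ α.ran := by rw [hran]; show b ≤ b; exact le_rfl
    obtain ⟨z, hz⟩ := hb
    have hzd : z ∈ α.Dom := (PFun.mem_dom α z).mpr ⟨b, hz⟩
    have haz : a ≤ z := by rw [hdom] at hzd; exact hzd
    have := (hmono a z ha hzd).mp haz
    exact this.trans_eq (Part.get_eq_of_mem hz hzd)
  · have : α.fn a ha ∈ α.ran := ⟨a, Part.get_mem _⟩
    rw [hran] at this
    exact this

end S19

namespace S19
variable {κ : Type*}

lemma comp_mem {α β : SN κ →. SN κ} {z w : SN κ} :
    w ∈ (β.comp α) z ↔ ∃ u ∈ α z, w ∈ β u := by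
  rw [PFun.comp_apply]; exact Part.mem_bind_iff

/-- the identity map on the principal filter over `c` -/
def idF (c : SN κ) : SN κ →. SN κ := fun z => ⟨c ≤ z, fun _ => z⟩

lemma idF_mem {c z w : SN κ} : w ∈ idF c z ↔ c ≤ z ∧ w = z := by
  constructor
  · rintro ⟨h, rfl⟩; exact ⟨h, rfl⟩
  · rintro ⟨h, rfl⟩; exact ⟨h, rfl⟩

lemma idF_isIPF (c : SN κ) : IsIPF (idF c) := by
  refine ⟨c, c, rfl, ?_, ?_⟩
  · ext w
    constructor
    · rintro ⟨z, hz⟩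
      obtain ⟨h, rfl⟩ := idF_mem.mp hz
      exact h
    · intro h
      exact ⟨w, idF_mem.mpr ⟨h, rfl⟩⟩
  · intro z w hz hw
    show z ≤ w ↔ z ≤ w
    rfl

lemma idF_idem (c : SN κ) : (idF c).comp (idF c) = idF c := by
  apply PFun.ext
  intro z w
  rw [comp_mem]
  constructor
  · rintro ⟨u, hu, hw⟩
    obtain ⟨h1, rfl⟩ := idF_mem.mp hu
    exact hw
  · intro h
    obtain ⟨h1, h2⟩ := idF_mem.mp h
    exact ⟨z, idF_mem.mpr ⟨h1, rfl⟩, h⟩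

/-- pointwise max -/
noncomputable def snSup (u v : SN κ) : SN κ :=
  ⟨fun x => max (u.1 x) (v.1 x), fun x => le_max_of_le_left (SN.one_le u x), by
    apply Set.Finite.subset ((SN.fin u).union (SN.fin v))
    intro x hx
    simp only [Set.mem_setOf_eq] at hx
    rw [Set.mem_union, Set.mem_setOf_eq, Set.mem_setOf_eq]
    by_contra hc
    push_neg at hc
    obtain ⟨h1, h2⟩ := hc
    rw [h1, h2] at hx
    simp at hx⟩

/-- key transfer: if `α` has spec `p` with range filter `↑b`, `β` has the same spec `p`,
and `w = α z ≥ c ≥ b'` (the range base of `β`), then `w ∈ β z`. -/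
lemma mem_of_spec {α β : SN κ →. SN κ} {a a' b' : SN κ}
    (hdom : α.Dom = {z | a ≤ z})
    (hdom' : β.Dom = {z | a' ≤ z}) (hran' : β.ran = {z | b' ≤ z})
    (hmono' : ∀ (z w : SN κ) (hz : z ∈ β.Dom) (hw : w ∈ β.Dom),
      z ≤ w ↔ β.fn z hz ≤ β.fn w hw)
    {p : Equiv.Perm κ × (κ →₀ ℤ)} (hpa : Spec α p) (hpb : Spec β p)
    {z w : SN κ} (hw : w ∈ α z) (hcw : b' ≤ w) : w ∈ β z := by
  have hz : z ∈ α.Dom := (PFun.mem_dom α z).mpr ⟨w, hw⟩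
  have hwfn : α.fn z hz = w := Part.get_eq_of_mem hw hz
  have ha' : a' ∈ β.Dom := by rw [hdom']; show a' ≤ a'; exact le_rfl
  have hb'fn : β.fn a' ha' = b' := fn_bot hdom' hran' hmono' ha'
  -- a' ≤ z
  have ha'z : a' ≤ z := by
    intro x
    show a'.1 x ≤ z.1 x
    have h1 := hpa z hz (p.1 x)
    rw [hwfn] at h1
    rw [Equiv.symm_apply_apply] at h1
    have h2 := hpb a' ha' (p.1 x)
    rw [hb'fn, Equiv.symm_apply_apply] at h2
    have h3 : b'.1 (p.1 x) ≤ w.1 (p.1 x) := hcw _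
    have h4 : (b'.1 (p.1 x) : ℤ) ≤ (w.1 (p.1 x) : ℤ) := Int.ofNat_le.mpr h3
    omega
  have hz' : z ∈ β.Dom := by rw [hdom']; exact ha'z
  have : β.fn z hz' = w := by
    apply Subtype.ext
    funext y
    have h1 := hpb z hz' y
    have h2 := hpa z hz y
    rw [hwfn] at h2
    have : ((β.fn z hz').1 y : ℤ) = (w.1 y : ℤ) := by omega
    exact_mod_cast this
  rw [← this]
  exact Part.get_mem _

lemma cmg_of_spec {α β : SN κ →. SN κ} (hα : IsIPF α) (hβ : IsIPF β)
    {p : Equiv.Perm κ × (κ →₀ ℤ)} (hpa : Spec α p) (hpb : Spec β p) : Cmg α β := by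
  obtain ⟨a, b, hdom, hran, hmono⟩ := hα
  obtain ⟨a', b', hdom', hran', hmono'⟩ := hβ
  set c := snSup b b' with hc
  have hcb : b ≤ c := fun x => le_max_left _ _
  have hcb' : b' ≤ c := fun x => le_max_right _ _
  refine ⟨idF c, idF_isIPF c, idF_idem c, ?_⟩
  apply PFun.ext
  intro z w
  rw [comp_mem, comp_mem]
  constructor
  · rintro ⟨u, hu, hw⟩
    obtain ⟨h1, h2⟩ := idF_mem.mp hw
    subst h2
    refine ⟨w, ?_, idF_mem.mpr ⟨h1, rfl⟩⟩
    exact mem_of_spec hdom hdom' hran' hmono' hpa hpb hu (hcb'.trans h1)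
  · rintro ⟨u, hu, hw⟩
    obtain ⟨h1, h2⟩ := idF_mem.mp hw
    subst h2
    refine ⟨w, ?_, idF_mem.mpr ⟨h1, rfl⟩⟩
    exact mem_of_spec hdom' hdom hran hmono hpb hpa hu (hcb.trans h1)


lemma pair_eq_of_agree {z₀ : SN κ} {p q : Equiv.Perm κ × (κ →₀ ℤ)}
    (H : ∀ z : SN κ, z₀ ≤ z → ∀ y,
      (z.1 (p.1.symm y) : ℤ) + p.2 y = (z.1 (q.1.symm y) : ℤ) + q.2 y) : p = q := by
  have hsymm : ∀ y, p.1.symm y = q.1.symm y := by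
    intro y
    set u := p.1.symm y with hu
    set v := q.1.symm y with hv
    have E1 := H z₀ le_rfl y
    have E2 := H (bump z₀ u) (bump_le z₀ u) y
    rw [← hu, ← hv] at E1 E2
    rw [bump_apply, bump_apply, if_pos rfl] at E2
    by_contra hne
    rw [if_neg (fun hc : v = u => hne hc.symm)] at E2
    omega
  have hg : p.1 = q.1 := by
    have h1 : p.1.symm = q.1.symm := Equiv.ext hsymm
    have h2 := congrArg Equiv.symm h1
    rwa [Equiv.symm_symm, Equiv.symm_symm] at h2
  have hm : p.2 = q.2 := by
    ext y
    have E1 := H z₀ le_rfl y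
    rw [hsymm y] at E1
    omega
  exact Prod.ext hg hm

lemma idem_fixed {ε : SN κ →. SN κ} {c : SN κ} (hdom : ε.Dom = {z | c ≤ z})
    (hmono : ∀ (z w : SN κ) (hz : z ∈ ε.Dom) (hw : w ∈ ε.Dom),
      z ≤ w ↔ ε.fn z hz ≤ ε.fn w hw)
    (hidem : ε.comp ε = ε) : ∀ z (hz : z ∈ ε.Dom), ε.fn z hz = z := by
  intro z hz
  have hz2 : z ∈ (ε.comp ε).Dom := by rw [hidem]; exact hz
  obtain ⟨w, hwmem⟩ := (PFun.mem_dom _ z).mp hz2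
  obtain ⟨u, hu, hw⟩ := comp_mem.mp hwmem
  have hfu : u = ε.fn z hz := (Part.get_eq_of_mem hu hz).symm
  have hud : u ∈ ε.Dom := (PFun.mem_dom ε u).mpr ⟨w, hw⟩
  have hw2 : w ∈ ε z := by rw [← hidem]; exact hwmem
  have hwz : w = ε.fn z hz := (Part.get_eq_of_mem hw2 hz).symm
  have hfufn : ε.fn u hud = u := by
    show (ε u).get hud = u
    rw [Part.get_eq_of_mem hw hud, hwz, ← hfu]
  have h1 : ε.fn u hud = ε.fn z hz := by rw [hfufn, hfu]
  have hle : u ≤ z := (hmono u z hud hz).mpr (le_of_eq h1)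
  have hge : z ≤ u := (hmono z u hz hud).mpr (le_of_eq h1.symm)
  rw [← hfu]
  exact le_antisymm hle hge

lemma spec_eq_of_cmg {α β : SN κ →. SN κ} (hα : IsIPF α) (hβ : IsIPF β)
    (hcmg : Cmg α β) {p q : Equiv.Perm κ × (κ →₀ ℤ)}
    (hp : Spec α p) (hq : Spec β q) : p = q := by
  obtain ⟨ε, hεIPF, hidem, heq⟩ := hcmg
  obtain ⟨c, d, hdomε, hranε, hmonoε⟩ := hεIPF
  obtain ⟨a, b, hdom, hran, hmono⟩ := hα
  have hfix := idem_fixed hdomε hmonoε hidem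
  have hz0mem : (fun x => max (a.1 x) ((c.1 (p.1 x) : ℤ) - p.2 (p.1 x)).toNat) ∈ sigmaN κ := by
    constructor
    · intro x
      exact le_max_of_le_left (SN.one_le a x)
    · apply Set.Finite.subset (((SN.fin a).union
        ((SN.fin c).preimage (Set.injOn_of_injective p.1.injective))).union
        ((p.2.finite_support).preimage (Set.injOn_of_injective p.1.injective)))
      intro x hx
      simp only [Set.mem_setOf_eq] at hx
      rw [Set.mem_union, Set.mem_union, Set.mem_preimage, Set.mem_preimage,
        Set.mem_setOf_eq, Set.mem_setOf_eq]
      by_contra hc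
      push_neg at hc
      obtain ⟨⟨h1, h2⟩, h3⟩ := hc
      rw [Function.mem_support, not_not] at h3
      rw [h1, h2, h3] at hx
      simp at hx
  set z₀ : SN κ := ⟨_, hz0mem⟩ with hz₀
  have hz₀app : ∀ x, z₀.1 x = max (a.1 x) ((c.1 (p.1 x) : ℤ) - p.2 (p.1 x)).toNat := fun _ => rfl
  have haz : ∀ z : SN κ, z₀ ≤ z → a ≤ z := by
    intro z h x
    exact le_trans (le_max_left _ _) (h x)
  have hcfn : ∀ (z : SN κ) (hz : z ∈ α.Dom), z₀ ≤ z → c ≤ α.fn z hz := by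
    intro z hz hz0 y
    show c.1 y ≤ (α.fn z hz).1 y
    have h1 := hp z hz y
    have h2 : ((c.1 (p.1 (p.1.symm y)) : ℤ) - p.2 (p.1 (p.1.symm y))).toNat
        ≤ z₀.1 (p.1.symm y) := le_max_right _ _
    rw [Equiv.apply_symm_apply] at h2
    have h3 : z₀.1 (p.1.symm y) ≤ z.1 (p.1.symm y) := hz0 _
    omega
  have main : ∀ (z : SN κ) (hz : z ∈ α.Dom), z₀ ≤ z →
      ∃ hzb : z ∈ β.Dom, β.fn z hzb = α.fn z hz := by
    intro z hz hz0
    set w := α.fn z hz with hwdef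
    have hwc : c ≤ w := hcfn z hz hz0
    have hwd : w ∈ ε.Dom := by rw [hdomε]; exact hwc
    have hwε : w ∈ ε w := by
      have h5 : (ε w).get hwd = w := hfix w hwd
      have := Part.get_mem hwd
      rwa [h5] at this
    have hwcomp : w ∈ (ε.comp α) z := comp_mem.mpr ⟨w, Part.get_mem hz, hwε⟩
    rw [heq] at hwcomp
    obtain ⟨u, hu, hw⟩ := comp_mem.mp hwcomp
    have hud : u ∈ ε.Dom := (PFun.mem_dom ε u).mpr ⟨w, hw⟩
    have hwu : w = u := by
      have h6 : (ε u).get hud = u := hfix u hud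
      have := Part.get_eq_of_mem hw hud
      rw [h6] at this
      exact this.symm
    have hzb : z ∈ β.Dom := (PFun.mem_dom β z).mpr ⟨u, hu⟩
    refine ⟨hzb, ?_⟩
    rw [hwu]
    exact Part.get_eq_of_mem hu hzb
  apply pair_eq_of_agree (z₀ := z₀)
  intro z hz0 y
  have hzda : z ∈ α.Dom := by rw [hdom]; exact haz z hz0
  obtain ⟨hzdb, hfneq⟩ := main z hzda hz0
  have h1 := hp z hzda y
  have h2 := hq z hzdb y
  rw [hfneq] at h2
  omega


section Std
variable (g : Equiv.Perm κ) (M : κ →₀ ℤ)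

/-- base point of the domain filter of the standard IPF for `(g, M)` -/
noncomputable def srcF : SN κ :=
  ⟨fun x => 1 + (M (g x)).natAbs, fun x => le_add_right le_rfl, by
    apply Set.Finite.subset (M.finite_support.preimage (Set.injOn_of_injective g.injective))
    intro x hx
    simp only [Set.mem_setOf_eq] at hx
    rw [Set.mem_preimage, Function.mem_support]
    intro hc
    rw [hc] at hx
    simp at hx⟩

lemma srcF_ge (z : SN κ) (h : srcF g M ≤ z) (y : κ) :
    1 ≤ (z.1 (g.symm y) : ℤ) + M y := by
  have h1 : 1 + (M (g (g.symm y))).natAbs ≤ z.1 (g.symm y) := h (g.symm y)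
  rw [Equiv.apply_symm_apply] at h1
  have h2 : ((1 + (M y).natAbs : ℕ) : ℤ) ≤ (z.1 (g.symm y) : ℤ) := Int.ofNat_le.mpr h1
  have h3 : (M y).natAbs = (M y).natAbs := rfl
  have h4 : ((M y).natAbs : ℤ) = |M y| := Int.abs_eq_natAbs (M y) |>.symm
  have h5 : -(M y) ≤ |M y| := neg_le_abs (M y)
  push_cast at h2
  omega

/-- the value of the standard IPF for `(g, M)` at `z` -/
noncomputable def stdVal (z : SN κ) (h : srcF g M ≤ z) : SN κ :=
  ⟨fun y => ((z.1 (g.symm y) : ℤ) + M y).toNat, fun y => by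
    dsimp only
    have := srcF_ge g M z h y
    omega, by
    apply Set.Finite.subset (((SN.fin z).preimage
      (Set.injOn_of_injective g.symm.injective)).union M.finite_support)
    intro y hy
    simp only [Set.mem_setOf_eq] at hy
    rw [Set.mem_union, Set.mem_preimage, Set.mem_setOf_eq, Function.mem_support]
    by_contra hc
    push_neg at hc
    obtain ⟨h1, h2⟩ := hc
    rw [h1, h2] at hy
    simp at hy⟩

lemma stdVal_coe (z : SN κ) (h : srcF g M ≤ z) (y : κ) :
    ((stdVal g M z h).1 y : ℤ) = (z.1 (g.symm y) : ℤ) + M y := by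
  show (((z.1 (g.symm y) : ℤ) + M y).toNat : ℤ) = _
  have := srcF_ge g M z h y
  omega

/-- the standard IPF for `(g, M)` -/
noncomputable def stdMap : SN κ →. SN κ :=
  fun z => ⟨srcF g M ≤ z, fun h => stdVal g M z h⟩

lemma stdMap_dom : (stdMap g M).Dom = {z | srcF g M ≤ z} := rfl

lemma stdMap_fn (z : SN κ) (hz : z ∈ (stdMap g M).Dom) :
    (stdMap g M).fn z hz = stdVal g M z hz := rfl

lemma stdMap_isIPF : IsIPF (stdMap g M) := by
  refine ⟨srcF g M, stdVal g M (srcF g M) le_rfl, rfl, ?_, ?_⟩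
  · ext w
    constructor
    · rintro ⟨z, hz⟩
      obtain ⟨h, rfl⟩ : ∃ h : srcF g M ≤ z, stdVal g M z h = w := hz
      intro y
      show (stdVal g M (srcF g M) le_rfl).1 y ≤ (stdVal g M z h).1 y
      have h1 := stdVal_coe g M (srcF g M) le_rfl y
      have h2 := stdVal_coe g M z h y
      have h3 : (srcF g M).1 (g.symm y) ≤ z.1 (g.symm y) := h (g.symm y)
      omega
    · intro hw
      have hb : ∀ y, ((stdVal g M (srcF g M) le_rfl).1 y : ℤ)
          = ((srcF g M).1 (g.symm y) : ℤ) + M y := fun y => stdVal_coe g M _ le_rfl y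
      have hzfin : (fun x => ((w.1 (g x) : ℤ) - M (g x)).toNat) ∈ sigmaN κ := by
        constructor
        · intro x
          dsimp only
          have h1 : (stdVal g M (srcF g M) le_rfl).1 (g x) ≤ w.1 (g x) := hw (g x)
          have h2 := hb (g x)
          rw [Equiv.symm_apply_apply] at h2
          have h3 : 1 ≤ (srcF g M).1 x := SN.one_le _ x
          omega
        · apply Set.Finite.subset (((SN.fin w).preimage
            (Set.injOn_of_injective g.injective)).union
            (M.finite_support.preimage (Set.injOn_of_injective g.injective)))
          intro x hx
          simp only [Set.mem_setOf_eq] at hx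
          rw [Set.mem_union, Set.mem_preimage, Set.mem_preimage, Set.mem_setOf_eq,
            Function.mem_support]
          by_contra hc
          push_neg at hc
          obtain ⟨h1, h2⟩ := hc
          rw [h1, h2] at hx
          simp at hx
      set z : SN κ := ⟨_, hzfin⟩ with hzdef
      have hz1 : ∀ x, (z.1 x : ℤ) = (w.1 (g x) : ℤ) - M (g x) := by
        intro x
        show ((((w.1 (g x) : ℤ) - M (g x)).toNat : ℕ) : ℤ) = _
        have h1 : (stdVal g M (srcF g M) le_rfl).1 (g x) ≤ w.1 (g x) := hw (g x)
        have h2 := hb (g x)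
        rw [Equiv.symm_apply_apply] at h2
        have h3 : 1 ≤ (srcF g M).1 x := SN.one_le _ x
        omega
      have hsz : srcF g M ≤ z := by
        intro x
        show (srcF g M).1 x ≤ z.1 x
        have h1 : (stdVal g M (srcF g M) le_rfl).1 (g x) ≤ w.1 (g x) := hw (g x)
        have h2 := hb (g x)
        rw [Equiv.symm_apply_apply] at h2
        have h4 := hz1 x
        omega
      refine ⟨z, hsz, ?_⟩
      apply Subtype.ext
      funext y
      have h5 := stdVal_coe g M z hsz y
      have h6 := hz1 (g.symm y)
      rw [Equiv.apply_symm_apply] at h6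
      have : ((stdVal g M z hsz).1 y : ℤ) = (w.1 y : ℤ) := by omega
      exact_mod_cast this
  · intro z w hz hw
    constructor
    · intro h y
      show ((stdMap g M).fn z hz).1 y ≤ ((stdMap g M).fn w hw).1 y
      rw [stdMap_fn, stdMap_fn]
      have h1 := stdVal_coe g M z hz y
      have h2 := stdVal_coe g M w hw y
      have h3 : z.1 (g.symm y) ≤ w.1 (g.symm y) := h (g.symm y)
      omega
    · intro h x
      show z.1 x ≤ w.1 x
      have h1 : ((stdMap g M).fn z hz).1 (g x) ≤ ((stdMap g M).fn w hw).1 (g x) := h (g x)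
      rw [stdMap_fn, stdMap_fn] at h1
      have h2 := stdVal_coe g M z hz (g x)
      have h3 := stdVal_coe g M w hw (g x)
      rw [Equiv.symm_apply_apply] at h2 h3
      omega

lemma stdMap_spec : Spec (stdMap g M) (g, M) := by
  intro z hz y
  exact stdVal_coe g M z hz y


end Std

lemma spec_comp {α β : SN κ →. SN κ} {p q : Equiv.Perm κ × (κ →₀ ℤ)}
    (hp : Spec α p) (hq : Spec β q) :
    Spec (β.comp α) (p.1.trans q.1, Finsupp.equivMapDomain q.1 p.2 + q.2) := by
  intro z hz y
  obtain ⟨w, hw⟩ := (PFun.mem_dom _ z).mp hz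
  obtain ⟨u, hu, hwu⟩ := comp_mem.mp hw
  have hza : z ∈ α.Dom := (PFun.mem_dom α z).mpr ⟨u, hu⟩
  have huβ : u ∈ β.Dom := (PFun.mem_dom β u).mpr ⟨w, hwu⟩
  have hufn : α.fn z hza = u := Part.get_eq_of_mem hu hza
  have hwfn : β.fn u huβ = w := Part.get_eq_of_mem hwu huβ
  have hcfn : (β.comp α).fn z hz = w := Part.get_eq_of_mem hw hz
  rw [hcfn]
  have h1 := hq u huβ y
  rw [hwfn] at h1
  have h2 := hp z hza (q.1.symm y)
  rw [hufn] at h2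
  dsimp only
  have h3 : (p.1.trans q.1).symm y = p.1.symm (q.1.symm y) := rfl
  rw [h3, Finsupp.add_apply, Finsupp.equivMapDomain_apply]
  omega

end S19


/-- The quotient of `IPF(σℕ^κ)` by its least group congruence `C_mg` is isomorphic
to `S_κ ⋉ (σℤ^κ, +)`: there is a surjection `Ψ` from `IPF(σℕ^κ)` onto
`S_κ × σℤ^κ` whose fibers are exactly the `C_mg`-classes and which transforms
(left-to-right) composition into the semidirect-product multiplication. -/
theorem stmt19 {κ : Type*} [Infinite κ] :
    ∃ Ψ : {α : SN κ →. SN κ // IsIPF α} → Equiv.Perm κ × (κ →₀ ℤ),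
      Function.Surjective Ψ ∧
      (∀ α β : {α : SN κ →. SN κ // IsIPF α}, Ψ α = Ψ β ↔ Cmg α.1 β.1) ∧
      ∀ (α β : {α : SN κ →. SN κ // IsIPF α}) (h : IsIPF (β.1.comp α.1)),
        Ψ ⟨β.1.comp α.1, h⟩ = sdZ (Ψ α) (Ψ β) := by
  classical
  let Ψ : {α : SN κ →. SN κ // IsIPF α} → Equiv.Perm κ × (κ →₀ ℤ) :=
    fun α => Classical.choose (S19.exists_spec α.2)
  have hspec : ∀ α : {α : SN κ →. SN κ // IsIPF α}, S19.Spec α.1 (Ψ α) :=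
    fun α => Classical.choose_spec (S19.exists_spec α.2)
  have huniq : ∀ (α : {α : SN κ →. SN κ // IsIPF α}) p, S19.Spec α.1 p → Ψ α = p :=
    fun α p hp => S19.spec_unique α.2 (hspec α) hp
  refine ⟨Ψ, ?_, ?_, ?_⟩
  · intro p
    exact ⟨⟨S19.stdMap p.1 p.2, S19.stdMap_isIPF p.1 p.2⟩,
      (huniq _ _ (S19.stdMap_spec p.1 p.2)).trans (Prod.mk.eta)⟩
  · intro α β
    constructor
    · intro h
      exact S19.cmg_of_spec α.2 β.2 (hspec α) (h ▸ hspec β)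
    · intro h
      exact S19.spec_eq_of_cmg α.2 β.2 h (hspec α) (hspec β)
  · intro α β h
    exact huniq ⟨β.1.comp α.1, h⟩ _ (S19.spec_comp (hspec α) (hspec β))
end
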